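/- arXiv:1303.2363 — 6 statements merged into one kernel-verified Lean document; each statement's English description precedes it below -/
import Mathlib

section
/- Let A ⊆ B be integral domains, let f, g ∈ A[x] be non-zero polynomials such that g divides f in B[x], and let γ be the leading coefficient of g. Then g divides f in the localization A[1/γ][x] (the ring of polynomials over the ring of fractions of A with respect to powers of γ). -/
open Polynomial

/-- Let `A ⊆ B` be integral domains, `f, g ∈ A[x]` non-zero with `g ∣ f` in `B[x]`, and let
`γ` be the leading coefficient of `g`. Then `g ∣ f` in `A[1/γ][x]`, where `A[1/γ]` is the
localization of `A` away from `γ`. -/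
theorem dvd_map_localization_away {A B : Type} [CommRing A] [IsDomain A] [CommRing B]
    [IsDomain B] [Algebra A B] (hinj : Function.Injective (algebraMap A B))
    (f g : A[X]) (hf : f ≠ 0) (hg : g ≠ 0)
    (hdvd : g.map (algebraMap A B) ∣ f.map (algebraMap A B)) :
    g.map (algebraMap A (Localization.Away g.leadingCoeff)) ∣
      f.map (algebraMap A (Localization.Away g.leadingCoeff)) := by
  have hγ : g.leadingCoeff ≠ 0 := leadingCoeff_ne_zero.mpr hg
  set γ := g.leadingCoeff with hγdef
  set R := Localization.Away γ with hR
  let K := FractionRing B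
  let ψ : A →+* K := (algebraMap B K).comp (algebraMap A B)
  have hψinj : Function.Injective ψ := (IsFractionRing.injective B K).comp hinj
  have hunits : ∀ y : Submonoid.powers γ, IsUnit (ψ y) := by
    rintro ⟨_, n, rfl⟩
    simp only [map_pow]
    exact (isUnit_iff_ne_zero.mpr ((map_ne_zero_iff ψ hψinj).mpr hγ)).pow n
  let φ : R →+* K := IsLocalization.lift hunits
  have hφalg : ∀ a : A, φ (algebraMap A R a) = ψ a := fun a => IsLocalization.lift_eq hunits a
  have hARinj : Function.Injective (algebraMap A R) :=
    IsLocalization.injective R (powers_le_nonZeroDivisors_of_noZeroDivisors hγ)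
  have hφinj : Function.Injective φ := (IsLocalization.lift_injective_iff _).mpr
    (fun x y => by rw [hARinj.eq_iff, hψinj.eq_iff])
  set gR := g.map (algebraMap A R) with hgR
  set fR := f.map (algebraMap A R) with hfR
  have hlc : gR.leadingCoeff = algebraMap A R γ := leadingCoeff_map_of_injective hARinj g
  have hu : IsUnit gR.leadingCoeff :=
    hlc ▸ IsLocalization.map_units R ⟨γ, Submonoid.mem_powers γ⟩
  set g' := hu.unit⁻¹ • gR with hg'
  have hmonic : g'.Monic := monic_of_isUnit_leadingCoeff_inv_smul hu
  haveI : Nontrivial R := ⟨⟨0, 1, fun e => zero_ne_one (hARinj (by simpa using e))⟩⟩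
  have hdiv : fR %ₘ g' + g' * (fR /ₘ g') = fR := modByMonic_add_div fR g'
  have hdeg : (fR %ₘ g').degree < g'.degree := degree_modByMonic_lt fR hmonic
  have hcomp : ∀ p : A[X], (p.map (algebraMap A R)).map φ = p.map ψ := fun p => by
    rw [Polynomial.map_map]; congr 1; exact RingHom.ext hφalg
  obtain ⟨h, hh⟩ := hdvd
  have hK : f.map ψ = g.map ψ * h.map (algebraMap B K) := by
    have := congrArg (Polynomial.map (algebraMap B K)) hh
    rwa [Polynomial.map_mul, Polynomial.map_map, Polynomial.map_map] at this
  have hg'C : g' = C (↑hu.unit⁻¹ : R) * gR := by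
    rw [hg', Units.smul_def, smul_eq_C_mul]
  have hg'K : g'.map φ = C (φ ↑hu.unit⁻¹) * g.map ψ := by
    rw [hg'C, Polynomial.map_mul, map_C, hcomp]
  have hdivK : (fR %ₘ g').map φ + g'.map φ * ((fR /ₘ g').map φ) = f.map ψ := by
    rw [← hcomp f, ← Polynomial.map_mul, ← Polynomial.map_add, hdiv]
  have hrK : (fR %ₘ g').map φ =
      g.map ψ * (h.map (algebraMap B K) - C (φ ↑hu.unit⁻¹) * (fR /ₘ g').map φ) := by
    rw [hg'K] at hdivK
    rw [mul_sub, ← hK]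
    linear_combination hdivK
  have h1 : ((fR %ₘ g').map φ).degree < (g.map ψ).degree := by
    calc ((fR %ₘ g').map φ).degree ≤ (fR %ₘ g').degree := Polynomial.degree_map_le
      _ < g'.degree := hdeg
      _ = gR.degree := by
          rw [hg', degree_smul_of_smul_regular gR (isSMulRegular_of_group _)]
      _ = g.degree := degree_map_eq_of_injective hARinj g
      _ = (g.map ψ).degree := (degree_map_eq_of_injective hψinj g).symm
  have hrφ0 : (fR %ₘ g').map φ = 0 := by
    rcases eq_or_ne (h.map (algebraMap B K) - C (φ ↑hu.unit⁻¹) * (fR /ₘ g').map φ) 0 with ht | ht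
    · rw [hrK, ht, mul_zero]
    · exfalso
      have h2 : (g.map ψ).degree ≤ ((fR %ₘ g').map φ).degree := by
        rw [hrK]; exact degree_le_mul_left _ ht
      exact h1.not_ge h2
  have hr0 : fR %ₘ g' = 0 := (Polynomial.map_eq_zero_iff hφinj).mp hrφ0
  refine ⟨C (↑hu.unit⁻¹ : R) * (fR /ₘ g'), ?_⟩
  calc fR = fR %ₘ g' + g' * (fR /ₘ g') := hdiv.symm
    _ = gR * (C (↑hu.unit⁻¹ : R) * (fR /ₘ g')) := by rw [hr0, hg'C]; ring
end

section
/- Let A be a UFD and let f, g ∈ A[x] be non-zero polynomials. Then gcd(f, g) has positive degree (is non-constant) if and only if the resultant res(f, g) equals 0. -/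
open Polynomial

/-- The Sylvester matrix of two polynomials `f, g` over a commutative ring: a square matrix
of size `deg f + deg g` whose first `deg g` rows are shifted copies of the coefficients of
`f` and whose last `deg f` rows are shifted copies of the coefficients of `g`. -/
noncomputable def sylvester {A : Type} [CommRing A] (f g : Polynomial A) :
    Matrix (Fin (g.natDegree + f.natDegree)) (Fin (g.natDegree + f.natDegree)) A :=
  fun i j =>
    if (i : ℕ) < g.natDegree then
      if (i : ℕ) ≤ (j : ℕ) ∧ (j : ℕ) ≤ (i : ℕ) + f.natDegree then
        f.coeff (f.natDegree + i - j)
      else 0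
    else
      if (i : ℕ) - g.natDegree ≤ (j : ℕ) ∧ (j : ℕ) ≤ ((i : ℕ) - g.natDegree) + g.natDegree then
        g.coeff (g.natDegree + ((i : ℕ) - g.natDegree) - j)
      else 0

open scoped Classical in
/-- The resultant of two polynomials: the determinant of their Sylvester matrix, with the
convention `res (h, 0) = res (0, h) = 0`. -/
noncomputable def resultant {A : Type} [CommRing A] (f g : Polynomial A) : A :=
  if f = 0 ∨ g = 0 then 0 else (_root_.sylvester f g).det

section Aux

variable {A : Type} [CommRing A]

/-- The polynomial encoded by the first `deg g` entries of a vector. -/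
noncomputable def sylU (f g : Polynomial A) (c : Fin (g.natDegree + f.natDegree) → A) :
    Polynomial A :=
  ∑ i : Fin (g.natDegree + f.natDegree),
    if (i : ℕ) < g.natDegree then C (c i) * X ^ (g.natDegree - 1 - (i : ℕ)) else 0

/-- The polynomial encoded by the last `deg f` entries of a vector. -/
noncomputable def sylV (f g : Polynomial A) (c : Fin (g.natDegree + f.natDegree) → A) :
    Polynomial A :=
  ∑ i : Fin (g.natDegree + f.natDegree),
    if (i : ℕ) < g.natDegree then 0
    else C (c i) * X ^ (f.natDegree - 1 - ((i : ℕ) - g.natDegree))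

lemma sylvester_eq_coeff (f g : Polynomial A) (i j : Fin (g.natDegree + f.natDegree)) :
    _root_.sylvester f g i j =
      if (i : ℕ) < g.natDegree then
        (X ^ (g.natDegree - 1 - (i : ℕ)) * f).coeff (g.natDegree + f.natDegree - 1 - (j : ℕ))
      else
        (X ^ (f.natDegree - 1 - ((i : ℕ) - g.natDegree)) * g).coeff
          (g.natDegree + f.natDegree - 1 - (j : ℕ)) := by
  have hi := i.isLt
  have hj := j.isLt
  unfold _root_.sylvester
  rw [(commute_X_pow f _).eq, (commute_X_pow g _).eq, coeff_mul_X_pow', coeff_mul_X_pow']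
  by_cases h : (i : ℕ) < g.natDegree
  · simp only [h, if_true]
    split_ifs with h1 h2 h2
    · congr 1; omega
    · omega
    · symm
      apply coeff_eq_zero_of_natDegree_lt
      omega
    · rfl
  · simp only [h, if_false]
    split_ifs with h1 h2 h2
    · congr 1; omega
    · omega
    · symm
      apply coeff_eq_zero_of_natDegree_lt
      omega
    · rfl

lemma vecMul_sylvester (f g : Polynomial A) (c : Fin (g.natDegree + f.natDegree) → A)
    (j : Fin (g.natDegree + f.natDegree)) :
    (Matrix.vecMul c (sylvester f g)) j =
      (sylU f g c * f + sylV f g c * g).coeff (g.natDegree + f.natDegree - 1 - (j : ℕ)) := by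
  simp only [Matrix.vecMul, dotProduct, sylU, sylV, Finset.sum_mul, coeff_add,
    finset_sum_coeff, ← Finset.sum_add_distrib]
  apply Finset.sum_congr rfl
  intro i _
  rw [sylvester_eq_coeff]
  by_cases h : (i : ℕ) < g.natDegree
  · simp only [h, if_true, zero_mul, coeff_zero, add_zero, mul_assoc, coeff_C_mul]
  · simp only [h, if_false, zero_mul, coeff_zero, zero_add, mul_assoc, coeff_C_mul]

lemma sylU_coeff_ge (f g : Polynomial A) (c : Fin (g.natDegree + f.natDegree) → A) (m : ℕ)
    (hm : g.natDegree ≤ m) : (sylU f g c).coeff m = 0 := by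
  rw [sylU, finset_sum_coeff]
  apply Finset.sum_eq_zero
  intro i _
  split_ifs with h
  · rw [coeff_C_mul, coeff_X_pow, if_neg (by omega), mul_zero]
  · simp

lemma sylV_coeff_ge (f g : Polynomial A) (c : Fin (g.natDegree + f.natDegree) → A) (m : ℕ)
    (hm : f.natDegree ≤ m) : (sylV f g c).coeff m = 0 := by
  rw [sylV, finset_sum_coeff]
  apply Finset.sum_eq_zero
  intro i _
  split_ifs with h
  · simp
  · rw [coeff_C_mul, coeff_X_pow, if_neg (by omega), mul_zero]

lemma sylU_coeff_lt (f g : Polynomial A) (c : Fin (g.natDegree + f.natDegree) → A) (m : ℕ)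
    (hm : m < g.natDegree) :
    (sylU f g c).coeff m = c ⟨g.natDegree - 1 - m, by omega⟩ := by
  rw [sylU, finset_sum_coeff]
  rw [Finset.sum_eq_single (⟨g.natDegree - 1 - m, by omega⟩ : Fin (g.natDegree + f.natDegree))]
  · rw [if_pos (by simp; omega), coeff_C_mul, coeff_X_pow, if_pos (by simp; omega), mul_one]
  · intro i _ hne
    split_ifs with h
    · rw [coeff_C_mul, coeff_X_pow, if_neg, mul_zero]
      intro hcontra
      apply hne
      apply Fin.ext
      simp only
      omega
    · simp
  · intro h
    exact absurd (Finset.mem_univ _) h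

lemma sylV_coeff_lt (f g : Polynomial A) (c : Fin (g.natDegree + f.natDegree) → A) (m : ℕ)
    (hm : m < f.natDegree) :
    (sylV f g c).coeff m = c ⟨g.natDegree + (f.natDegree - 1 - m), by omega⟩ := by
  rw [sylV, finset_sum_coeff]
  rw [Finset.sum_eq_single
    (⟨g.natDegree + (f.natDegree - 1 - m), by omega⟩ : Fin (g.natDegree + f.natDegree))]
  · rw [if_neg (by simp), coeff_C_mul, coeff_X_pow, if_pos (by simp; omega), mul_one]
  · intro i _ hne
    split_ifs with h
    · simp
    · rw [coeff_C_mul, coeff_X_pow, if_neg, mul_zero]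
      intro hcontra
      apply hne
      apply Fin.ext
      simp only
      have := i.isLt
      omega
  · intro h
    exact absurd (Finset.mem_univ _) h

lemma combo_coeff_ge (f g : Polynomial A) (c : Fin (g.natDegree + f.natDegree) → A) (m : ℕ)
    (hm : g.natDegree + f.natDegree ≤ m) :
    (sylU f g c * f + sylV f g c * g).coeff m = 0 := by
  rw [coeff_add, coeff_mul, coeff_mul]
  rw [Finset.sum_eq_zero, Finset.sum_eq_zero, add_zero]
  · rintro ⟨a, b⟩ hab
    rw [Finset.HasAntidiagonal.mem_antidiagonal] at hab
    by_cases h : f.natDegree ≤ a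
    · rw [sylV_coeff_ge f g c a h, zero_mul]
    · rw [coeff_eq_zero_of_natDegree_lt (show g.natDegree < b by omega), mul_zero]
  · rintro ⟨a, b⟩ hab
    rw [Finset.HasAntidiagonal.mem_antidiagonal] at hab
    by_cases h : g.natDegree ≤ a
    · rw [sylU_coeff_ge f g c a h, zero_mul]
    · rw [coeff_eq_zero_of_natDegree_lt (show f.natDegree < b by omega), mul_zero]

lemma vecMul_sylvester_eq_zero_iff (f g : Polynomial A)
    (c : Fin (g.natDegree + f.natDegree) → A) :
    Matrix.vecMul c (sylvester f g) = 0 ↔ sylU f g c * f + sylV f g c * g = 0 := by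
  constructor
  · intro h
    ext m
    rw [coeff_zero]
    by_cases hm : m < g.natDegree + f.natDegree
    · have := congrFun h ⟨g.natDegree + f.natDegree - 1 - m, by omega⟩
      rw [vecMul_sylvester] at this
      simp only [Pi.zero_apply] at this
      convert this using 2
      omega
    · exact combo_coeff_ge f g c m (by omega)
  · intro h
    funext j
    rw [vecMul_sylvester, h, coeff_zero, Pi.zero_apply]

/-- Key UFD lemma: if every common divisor of `f` and `g` is a constant and `f ∣ v * g`,
then `f` divides `v` up to a constant. -/
lemma ufd_dvd_aux [IsDomain A] [UniqueFactorizationMonoid A] (f : Polynomial A) :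
    ∀ g v : Polynomial A, v ≠ 0 → (∀ d : Polynomial A, d ∣ f → d ∣ g → d.natDegree = 0) →
      f ∣ v * g → ∃ u : Polynomial A, u ≠ 0 ∧ u.natDegree = 0 ∧ f ∣ u * v := by
  induction f using UniqueFactorizationMonoid.induction_on_prime with
  | h₁ =>
    intro g v hv hd hdvd
    have hvg : v * g = 0 := zero_dvd_iff.mp hdvd
    have hg : g = 0 := by
      rcases mul_eq_zero.mp hvg with h | h
      · exact absurd h hv
      · exact h
    have := hd X (dvd_zero _) (by rw [hg]; exact dvd_zero _)
    rw [natDegree_X] at this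
    omega
  | h₂ x hx =>
    intro g v hv hd hdvd
    exact ⟨1, one_ne_zero, natDegree_one, by rw [one_mul]; exact hx.dvd⟩
  | h₃ a p ha hp ih =>
    intro g v hv hd hdvd
    have hp0 : p ≠ 0 := hp.ne_zero
    have hda : ∀ d : Polynomial A, d ∣ a → d ∣ g → d.natDegree = 0 := fun d h1 h2 =>
      hd d (h1.trans (dvd_mul_left a p)) h2
    by_cases hpd : p.natDegree = 0
    · -- p is a constant prime
      have hadvd : a ∣ v * g := (dvd_mul_left a p).trans hdvd
      obtain ⟨u, hu0, hud, hau⟩ := ih g v hv hda hadvd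
      refine ⟨p * u, mul_ne_zero hp0 hu0, ?_, ?_⟩
      · rw [natDegree_mul hp0 hu0, hpd, hud]
      · rw [mul_assoc]
        exact mul_dvd_mul_left p hau
    · -- p has positive degree, so p ∤ g
      have hpg : ¬ p ∣ g := fun h =>
        hpd (hd p (dvd_mul_right p a) h)
      have hpvg : p ∣ v * g := (dvd_mul_right p a).trans hdvd
      have hpv : p ∣ v := by
        rcases hp.dvd_or_dvd hpvg with h | h
        · exact h
        · exact absurd h hpg
      obtain ⟨v', hv'⟩ := hpv
      have hv'0 : v' ≠ 0 := by
        rintro rfl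
        rw [mul_zero] at hv'
        exact hv hv'
      have havg : a ∣ v' * g := by
        have : p * a ∣ p * (v' * g) := by
          rw [← mul_assoc, ← hv']
          exact hdvd
        exact (mul_dvd_mul_iff_left hp0).mp this
      obtain ⟨u, hu0, hud, hau⟩ := ih g v' hv'0 hda havg
      refine ⟨u, hu0, hud, ?_⟩
      rw [hv', show u * (p * v') = p * (u * v') by ring]
      exact mul_dvd_mul_left p hau

end Aux

/-- Over a UFD `A`, two non-zero polynomials `f, g ∈ A[x]` have a non-constant gcd (i.e. a
common divisor of positive degree) if and only if their resultant vanishes. -/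
theorem gcd_nonconstant_iff_resultant_eq_zero {A : Type} [CommRing A] [IsDomain A]
    [UniqueFactorizationMonoid A] (f g : Polynomial A) (hf : f ≠ 0) (hg : g ≠ 0) :
    (∃ d : Polynomial A, d ∣ f ∧ d ∣ g ∧ 0 < d.natDegree) ↔ _root_.resultant f g = 0 := by
  classical
  rw [_root_.resultant, if_neg (by tauto), ← Matrix.exists_vecMul_eq_zero_iff]
  constructor
  · rintro ⟨d, ⟨f₁, hf₁⟩, ⟨g₁, hg₁⟩, hd⟩
    have hd0 : d ≠ 0 := by rintro rfl; rw [zero_mul] at hf₁; exact hf hf₁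
    have hf₁0 : f₁ ≠ 0 := by rintro rfl; rw [mul_zero] at hf₁; exact hf hf₁
    have hg₁0 : g₁ ≠ 0 := by rintro rfl; rw [mul_zero] at hg₁; exact hg hg₁
    have hdf : f.natDegree = d.natDegree + f₁.natDegree := by rw [hf₁, natDegree_mul hd0 hf₁0]
    have hdg : g.natDegree = d.natDegree + g₁.natDegree := by rw [hg₁, natDegree_mul hd0 hg₁0]
    -- u := g₁, v := -f₁ satisfy u * f + v * g = 0
    set u : Polynomial A := g₁ with hu_def
    set v : Polynomial A := -f₁ with hv_def
    have hu0 : u ≠ 0 := hg₁0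
    have hv0 : v ≠ 0 := neg_ne_zero.mpr hf₁0
    have hudeg : u.natDegree < g.natDegree := by omega
    have hvdeg : v.natDegree < f.natDegree := by rw [hv_def, natDegree_neg]; omega
    have hsum : u * f + v * g = 0 := by rw [hf₁, hg₁]; ring
    refine ⟨fun i => if h : (i : ℕ) < g.natDegree then u.coeff (g.natDegree - 1 - (i : ℕ))
      else v.coeff (f.natDegree - 1 - ((i : ℕ) - g.natDegree)), ?_, ?_⟩
    · -- the vector is nonzero
      intro hc
      have key := congrFun hc ⟨g.natDegree - 1 - u.natDegree, by omega⟩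
      simp only [Pi.zero_apply] at key
      rw [dif_pos (by show g.natDegree - 1 - u.natDegree < g.natDegree; omega)] at key
      have : g.natDegree - 1 - (g.natDegree - 1 - u.natDegree) = u.natDegree := by omega
      rw [this] at key
      exact leadingCoeff_ne_zero.mpr hu0 key
    · rw [vecMul_sylvester_eq_zero_iff]
      have hU : sylU f g (fun i => if h : (i : ℕ) < g.natDegree
          then u.coeff (g.natDegree - 1 - (i : ℕ))
          else v.coeff (f.natDegree - 1 - ((i : ℕ) - g.natDegree))) = u := by
        ext m
        by_cases hm : m < g.natDegree
        · rw [sylU_coeff_lt f g _ m hm, dif_pos (by simp; omega)]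
          congr 1
          simp only
          omega
        · rw [sylU_coeff_ge f g _ m (by omega),
            coeff_eq_zero_of_natDegree_lt (by omega)]
      have hV : sylV f g (fun i => if h : (i : ℕ) < g.natDegree
          then u.coeff (g.natDegree - 1 - (i : ℕ))
          else v.coeff (f.natDegree - 1 - ((i : ℕ) - g.natDegree))) = v := by
        ext m
        by_cases hm : m < f.natDegree
        · rw [sylV_coeff_lt f g _ m hm, dif_neg (by simp)]
          congr 1
          simp only
          omega
        · rw [sylV_coeff_ge f g _ m (by omega),
            coeff_eq_zero_of_natDegree_lt (by omega)]
      rw [hU, hV]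
      exact hsum
  · rintro ⟨c, hc0, hc⟩
    rw [vecMul_sylvester_eq_zero_iff] at hc
    set u := sylU f g c with hu_def
    set v := sylV f g c with hv_def
    by_contra hcon
    push_neg at hcon
    have hd : ∀ d : Polynomial A, d ∣ f → d ∣ g → d.natDegree = 0 := by
      intro d h1 h2
      have := hcon d h1 h2
      omega
    -- u and v are both nonzero
    have huv : u ≠ 0 ∨ v ≠ 0 := by
      by_contra h
      push_neg at h
      obtain ⟨hU, hV⟩ := h
      apply hc0
      funext i
      by_cases hi : (i : ℕ) < g.natDegree
      · have := sylU_coeff_lt f g c (g.natDegree - 1 - (i : ℕ)) (by omega)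
        rw [← hu_def, hU, coeff_zero] at this
        rw [Pi.zero_apply]
        convert this.symm using 2
        apply Fin.ext
        simp only
        omega
      · have hilt := i.isLt
        have := sylV_coeff_lt f g c (f.natDegree - 1 - ((i : ℕ) - g.natDegree)) (by omega)
        rw [← hv_def, hV, coeff_zero] at this
        rw [Pi.zero_apply]
        convert this.symm using 2
        apply Fin.ext
        simp only
        omega
    have hv0 : v ≠ 0 := by
      rintro hv
      rw [hv, zero_mul, add_zero, mul_eq_zero] at hc
      rcases hc with h | h
      · rcases huv with h' | h'
        · exact h' h
        · exact h' hv
      · exact hf h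
    have hu0 : u ≠ 0 := by
      rintro hu
      rw [hu, zero_mul, zero_add, mul_eq_zero] at hc
      rcases hc with h | h
      · exact hv0 h
      · exact hg h
    -- f divides v * g
    have hfvg : f ∣ v * g := ⟨-u, by linear_combination hc⟩
    obtain ⟨w, hw0, hwd, hfw⟩ := ufd_dvd_aux f g v hv0 hd hfvg
    have hwv0 : w * v ≠ 0 := mul_ne_zero hw0 hv0
    have h1 : f.natDegree ≤ (w * v).natDegree := natDegree_le_of_dvd hfw hwv0
    rw [natDegree_mul hw0 hv0, hwd, zero_add] at h1
    -- but v has degree < deg f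
    have h2 : v.natDegree < f.natDegree := by
      have hcoeff := sylV_coeff_ge f g c v.natDegree
      by_contra hcontra
      push_neg at hcontra
      have := hcoeff (by omega)
      rw [← hv_def] at this
      exact leadingCoeff_ne_zero.mpr hv0 this
    omega
end

section
/- Let p be a prime, k ≥ 1, and A ⊆ Z/pZ a finite set. Suppose A = {a_1,...,a_n}, and let L_1, L_2 be collections of linear polynomials f ∈ Z[x_1,...,x_n] of ℓ1-norm at most k (including constant term), such that every f ∈ L_1 vanishes at (a_1,...,a_n) in Z/pZ and every f ∈ L_2 does not. If n < log_k(p) − 1, then there exist b_1,...,b_n in the localization Z_{(p)} of Z at the prime ideal (p) such that the canonical ring homomorphism Z_{(p)} → Z/pZ maps b_i to a_i, every f ∈ L_1 vanishes at (b_1,...,b_n), and no f ∈ L_2 vanishes at (b_1,...,b_n). -/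
/-- The ℓ1-norm of a multivariate integer polynomial. -/
noncomputable def l1Norm {n : ℕ} (f : MvPolynomial (Fin n) ℤ) : ℕ :=
  ∑ m ∈ f.support, (f.coeff m).natAbs

open MvPolynomial Finset

variable {n : ℕ}

/-- the relevant finset of monomials of degree ≤ 1 -/
noncomputable def linS (n : ℕ) : Finset (Fin n →₀ ℕ) :=
  insert 0 (Finset.univ.image fun i => Finsupp.single i 1)

lemma single_ne_zero' (i : Fin n) : (Finsupp.single i 1 : Fin n →₀ ℕ) ≠ 0 := by
  simp [Finsupp.single_eq_zero]

lemma support_subset_linS (f : MvPolynomial (Fin n) ℤ) (hf : f.totalDegree ≤ 1) :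
    f.support ⊆ linS n := by
  intro m hm
  have hdeg : (m.sum fun _ e => e) ≤ 1 := le_trans (MvPolynomial.le_totalDegree hm) hf
  rw [linS, Finset.mem_insert]
  rcases Nat.le_one_iff_eq_zero_or_eq_one.mp hdeg with h0 | h1
  · left
    ext j
    simp only [Finsupp.coe_zero, Pi.zero_apply]
    by_contra hne
    have hjm : j ∈ m.support := Finsupp.mem_support_iff.mpr hne
    have h2 := Finset.single_le_sum (f := m) (fun _ _ => Nat.zero_le _) hjm
    have h3 : ∑ x ∈ m.support, m x = 0 := h0
    omega
  · right
    obtain ⟨i, hi⟩ : ∃ i, m i ≠ 0 := by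
      by_contra h
      push_neg at h
      have : m = 0 := Finsupp.ext fun j => h j
      rw [this] at h1; simp at h1
    have hmem : i ∈ m.support := Finsupp.mem_support_iff.mpr hi
    have hle : m i ≤ 1 := by
      calc m i ≤ m.support.sum m := Finset.single_le_sum (fun _ _ => Nat.zero_le _) hmem
      _ = 1 := h1
    have hmi : m i = 1 := le_antisymm hle (Nat.one_le_iff_ne_zero.mpr hi)
    refine Finset.mem_image.mpr ⟨i, Finset.mem_univ _, ?_⟩
    ext j
    rcases eq_or_ne j i with rfl | hj
    · simp [hmi]
    · simp [Finsupp.single_apply, hj.symm]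
      by_contra hne
      have hjm : j ∈ m.support := Finsupp.mem_support_iff.mpr (fun h => hne h.symm)
      have h4 : m i + m j ≤ ∑ x ∈ m.support, m x := by
        rw [Finset.sum_eq_add_sum_sdiff_singleton_of_mem hmem]
        have hjm' : j ∈ m.support \ {i} := by simp [hjm, hj]
        have := Finset.single_le_sum (f := m) (fun _ _ => Nat.zero_le _) hjm'
        omega
      have h3 : ∑ x ∈ m.support, m x = 1 := h1
      omega

lemma aeval_linear {R : Type*} [CommRing R] (f : MvPolynomial (Fin n) ℤ)
    (hf : f.totalDegree ≤ 1) (b : Fin n → R) :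
    MvPolynomial.aeval b f =
      ((f.coeff 0 : ℤ) : R) + ∑ i, ((f.coeff (Finsupp.single i 1) : ℤ) : R) * b i := by
  have h0 : (0 : Fin n →₀ ℕ) ∉ Finset.univ.image fun i => (Finsupp.single i 1 : Fin n →₀ ℕ) := by
    simp [Finsupp.single_eq_zero, eq_comm]
  have hinj : Function.Injective fun i : Fin n => (Finsupp.single i 1 : Fin n →₀ ℕ) :=
    Finsupp.single_left_injective one_ne_zero
  have : MvPolynomial.aeval b f
      = ∑ m ∈ f.support, ((f.coeff m : ℤ) : R) * ∏ j, b j ^ m j := by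
    rw [MvPolynomial.aeval_def, MvPolynomial.eval₂_eq']
    simp [algebraMap_int_eq]
  rw [this, Finset.sum_subset (support_subset_linS f hf)
    (by intro m _ hm; rw [MvPolynomial.notMem_support_iff.mp hm]; simp)]
  rw [linS, Finset.sum_insert h0, Finset.sum_image (fun i _ j _ h => hinj h)]
  congr 1
  · simp
  · refine Finset.sum_congr rfl fun i _ => ?_
    congr 1
    rw [Finset.prod_eq_single i (fun j _ hj => by simp [Finsupp.single_apply, hj.symm])
      (by simp)]
    simp

lemma l1_decomp (f : MvPolynomial (Fin n) ℤ) (hf : f.totalDegree ≤ 1) :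
    (f.coeff 0).natAbs + ∑ i, (f.coeff (Finsupp.single i 1)).natAbs ≤ l1Norm f := by
  have h0 : (0 : Fin n →₀ ℕ) ∉ Finset.univ.image fun i => (Finsupp.single i 1 : Fin n →₀ ℕ) := by
    simp [Finsupp.single_eq_zero, eq_comm]
  have hinj : Function.Injective fun i : Fin n => (Finsupp.single i 1 : Fin n →₀ ℕ) :=
    Finsupp.single_left_injective one_ne_zero
  have : l1Norm f = ∑ m ∈ linS n, (f.coeff m).natAbs := by
    rw [l1Norm]
    exact Finset.sum_subset (support_subset_linS f hf)
      (by intro m _ hm; rw [MvPolynomial.notMem_support_iff.mp hm]; simp)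
  rw [this, linS, Finset.sum_insert h0, Finset.sum_image (fun i _ j _ h => hinj h)]

lemma exists_lambda {p k : ℕ} {n : ℕ} (hp : p.Prime) (hk : 1 < k)
    (hkp : k ^ (n + 1) < p) (a : Fin n → ZMod p) :
    ∃ (Λ : ℤ) (r : Fin n → ℤ), 0 < Λ ∧ Λ ≤ (k : ℤ) ^ n ∧
      (∀ i, |r i| ≤ ((p / k : ℕ) : ℤ)) ∧
      (∀ i, ((r i : ℤ) : ZMod p) = (Λ : ZMod p) * a i) := by
  haveI : NeZero p := ⟨hp.pos.ne'⟩
  set q : ℕ := p / k + 1 with hqdef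
  have hq : 0 < q := Nat.succ_pos _
  have hk0 : 0 < k := by omega
  have hkq : p < k * q := by
    have h1 := Nat.div_add_mod p k
    have h2 : p % k < k := Nat.mod_lt _ hk0
    have h3 : k * q = k * (p / k) + k := by rw [hqdef, Nat.mul_add, Nat.mul_one]
    omega
  have hval : ∀ (t : ℕ) (i : Fin n), ((t : ZMod p) * a i).val / q < k := by
    intro t i
    rw [Nat.div_lt_iff_lt_mul hq]
    calc ((t : ZMod p) * a i).val < p := ZMod.val_lt _
      _ < k * q := hkq
    -- note: need k * q vs q * k
  set g : Fin (k ^ n + 1) → (Fin n → Fin k) :=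
    fun t i => ⟨((t.1 : ZMod p) * a i).val / q, hval t.1 i⟩ with hgdef
  have hcard : Fintype.card (Fin n → Fin k) < Fintype.card (Fin (k ^ n + 1)) := by
    simp [Fintype.card_fun]
  obtain ⟨t₁, t₂, hne, heq⟩ := Fintype.exists_ne_map_eq_of_card_lt g hcard
  have key : ∀ t₁ t₂ : Fin (k ^ n + 1), t₂ < t₁ → g t₁ = g t₂ →
      ∃ (Λ : ℤ) (r : Fin n → ℤ), 0 < Λ ∧ Λ ≤ (k : ℤ) ^ n ∧
        (∀ i, |r i| ≤ ((p / k : ℕ) : ℤ)) ∧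
        (∀ i, ((r i : ℤ) : ZMod p) = (Λ : ZMod p) * a i) := by
    clear hne heq t₁ t₂
    intro t₁ t₂ hlt heq
    refine ⟨(t₁.1 : ℤ) - t₂.1,
      fun i => ((((t₁.1 : ZMod p) * a i).val : ℤ) - (((t₂.1 : ZMod p) * a i).val : ℤ)),
      sub_pos.mpr (by exact_mod_cast hlt), ?_, ?_, ?_⟩
    · have h1 : t₁.1 ≤ k ^ n := Nat.lt_succ_iff.mp t₁.2
      have : (t₁.1 : ℤ) ≤ (k : ℤ) ^ n := by exact_mod_cast h1
      omega
    · intro i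
      dsimp only
      set v₁ := ((t₁.1 : ZMod p) * a i).val
      set v₂ := ((t₂.1 : ZMod p) * a i).val
      have hdiv : v₁ / q = v₂ / q := by
        have := congrFun heq i
        simpa [hgdef, Fin.ext_iff] using this
      have e₁ := Nat.div_add_mod v₁ q
      have e₂ := Nat.div_add_mod v₂ q
      have m₁ : v₁ % q < q := Nat.mod_lt _ hq
      have m₂ : v₂ % q < q := Nat.mod_lt _ hq
      rw [hdiv] at e₁
      rw [abs_le]
      omega
    · intro i
      have hv : ∀ t : ℕ, ((((t : ZMod p) * a i).val : ℕ) : ZMod p) = (t : ZMod p) * a i := by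
        intro t
        rw [ZMod.natCast_val, ZMod.cast_id]
      dsimp only
      push_cast
      rw [hv t₁.1, hv t₂.1]
      ring
  rcases hne.lt_or_gt with h | h
  · exact key t₂ t₁ h heq.symm
  · exact key t₁ t₂ h heq

/-- Let `p` be a prime, `k > 1`, and `A = {a 1, …, a n} ⊆ ℤ/pℤ`.  Let `L₁, L₂` be
collections of linear polynomials in `ℤ[x₁,…,xₙ]` of ℓ1-norm at most `k` (constant term
included) such that those in `L₁` vanish at `a` and those in `L₂` do not.  If
`n < log_k p − 1` then there are `b i ∈ ℤ_{(p)}` (rationals with denominator prime to `p`,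
realized here inside `ℚ`) mapped to `a i` by the canonical homomorphism `ℤ_{(p)} → ℤ/pℤ`,
with all polynomials of `L₁` vanishing at `b` and none of `L₂` vanishing at `b`. -/
theorem rectify_linear {p : ℕ} (hp : p.Prime) (k : ℕ) (hk : 1 < k) (n : ℕ)
    (a : Fin n → ZMod p) (ha : Function.Injective a)
    (L₁ L₂ : Set (MvPolynomial (Fin n) ℤ))
    (hL₁deg : ∀ f ∈ L₁, f.totalDegree ≤ 1) (hL₁norm : ∀ f ∈ L₁, l1Norm f ≤ k)
    (hL₂deg : ∀ f ∈ L₂, f.totalDegree ≤ 1) (hL₂norm : ∀ f ∈ L₂, l1Norm f ≤ k)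
    (hL₁ : ∀ f ∈ L₁, MvPolynomial.aeval a f = 0)
    (hL₂ : ∀ f ∈ L₂, MvPolynomial.aeval a f ≠ 0)
    (hsize : (n : ℝ) < Real.logb k p - 1) :
    ∃ b : Fin n → ℚ,
      (∀ i, ¬ (p : ℕ) ∣ (b i).den) ∧
      (∀ i, ((b i).num : ZMod p) = a i * ((b i).den : ZMod p)) ∧
      (∀ f ∈ L₁, MvPolynomial.aeval b f = 0) ∧
      (∀ f ∈ L₂, MvPolynomial.aeval b f ≠ 0) := by
  haveI := Fact.mk hp
  -- k^(n+1) < p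
  have hkp : k ^ (n + 1) < p := by
    have hk1 : (1 : ℝ) < (k : ℝ) := by exact_mod_cast hk
    have hp0 : (0 : ℝ) < (p : ℝ) := by exact_mod_cast hp.pos
    have h1 : ((n + 1 : ℕ) : ℝ) < Real.logb k p := by push_cast; linarith
    have h2 : (k : ℝ) ^ ((n + 1 : ℕ) : ℝ) < (k : ℝ) ^ Real.logb k p :=
      (Real.rpow_lt_rpow_left_iff hk1).mpr h1
    rw [Real.rpow_logb (by linarith) (ne_of_gt hk1) hp0, Real.rpow_natCast] at h2
    exact_mod_cast h2
  obtain ⟨Λ, r, hΛpos, hΛle, hrle, hrmod⟩ := exists_lambda hp hk hkp a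
  have hknp : (k : ℤ) ^ n < p := by
    have h1 : k ^ n < k ^ (n + 1) := Nat.pow_lt_pow_right hk (by omega)
    exact_mod_cast lt_trans h1 hkp
  have hΛltp : Λ < (p : ℤ) := lt_of_le_of_lt hΛle hknp
  have hΛp : ¬ ((p : ℤ) ∣ Λ) := by
    intro hdvd
    have := Int.le_of_dvd hΛpos hdvd
    omega
  have hΛz : ((Λ : ℤ) : ZMod p) ≠ 0 := by
    rw [Ne, ZMod.intCast_zmod_eq_zero_iff_dvd]
    exact hΛp
  have hΛQ : (Λ : ℚ) ≠ 0 := by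
    simp only [Ne, Int.cast_eq_zero]
    omega
  set b : Fin n → ℚ := fun i => (r i : ℚ) / (Λ : ℚ) with hbdef
  -- key evaluation fact
  have key : ∀ f : MvPolynomial (Fin n) ℤ, f.totalDegree ≤ 1 → l1Norm f ≤ k →
      ∃ N : ℤ, MvPolynomial.aeval b f = (N : ℚ) / (Λ : ℚ) ∧
        ((N : ℤ) : ZMod p) = (Λ : ZMod p) * MvPolynomial.aeval a f ∧ |N| < p := by
    intro f hdeg hnorm
    set c₀ : ℤ := f.coeff 0 with hc0
    set c : Fin n → ℤ := fun i => f.coeff (Finsupp.single i 1) with hc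
    refine ⟨Λ * c₀ + ∑ i, c i * r i, ?_, ?_, ?_⟩
    · rw [aeval_linear f hdeg b]
      have hterm : ∀ i ∈ Finset.univ (α := Fin n),
          ((f.coeff (Finsupp.single i 1) : ℤ) : ℚ) * b i
            = ((c i * r i : ℤ) : ℚ) / (Λ : ℚ) := by
        intro i _
        rw [hbdef, hc]
        push_cast
        ring
      rw [Finset.sum_congr rfl hterm, ← Finset.sum_div, eq_div_iff hΛQ, add_mul,
        div_mul_cancel₀ _ hΛQ]
      simp only [hc0, hc]
      push_cast
      ring
    · push_cast
      rw [aeval_linear f hdeg a]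
      have : ∀ i ∈ Finset.univ (α := Fin n),
          ((c i : ℤ) : ZMod p) * ((r i : ℤ) : ZMod p)
            = (c i : ZMod p) * ((Λ : ZMod p) * a i) := by
        intro i _
        rw [hrmod i]
      rw [Finset.sum_congr rfl this]
      simp only [hc0, hc]
      rw [mul_add, Finset.mul_sum]
      congr 1
      exact Finset.sum_congr rfl fun i _ => by ring
    · -- bound
      set M : ℤ := max ((k : ℤ) ^ n) ((p / k : ℕ) : ℤ) with hM
      have hM0 : 0 ≤ M := le_trans (by positivity) (le_max_left _ _)
      have hB : (c₀.natAbs : ℤ) + ∑ i, ((c i).natAbs : ℤ) ≤ (k : ℤ) := by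
        have := l1_decomp f hdeg
        have h2 : c₀.natAbs + ∑ i, (c i).natAbs ≤ k := le_trans this hnorm
        exact_mod_cast h2
      have habs : |Λ * c₀ + ∑ i, c i * r i| ≤ M * ((c₀.natAbs : ℤ) + ∑ i, ((c i).natAbs : ℤ)) := by
        have h1 : |Λ * c₀ + ∑ i, c i * r i| ≤ |Λ * c₀| + |∑ i, c i * r i| := abs_add_le _ _
        have h2 : |∑ i, c i * r i| ≤ ∑ i, |c i * r i| := Finset.abs_sum_le_sum_abs _ _
        have h3 : |Λ * c₀| ≤ M * |c₀| := by
          rw [abs_mul]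
          apply mul_le_mul_of_nonneg_right _ (abs_nonneg _)
          rw [abs_of_pos hΛpos]
          exact le_trans hΛle (le_max_left _ _)
        have h5 : ∑ i, |c i * r i| ≤ ∑ i, M * |c i| := by
          refine Finset.sum_le_sum fun i _ => ?_
          rw [abs_mul, mul_comm]
          exact mul_le_mul_of_nonneg_right (le_trans (hrle i) (le_max_right _ _)) (abs_nonneg _)
        have h6 : M * |c₀| + ∑ i, M * |c i| = M * ((c₀.natAbs : ℤ) + ∑ i, ((c i).natAbs : ℤ)) := by
          rw [mul_add, Finset.mul_sum]
          simp only [Int.abs_eq_natAbs]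
        linarith
      have hMk : M * (k : ℤ) < p := by
        rcases max_cases ((k : ℤ) ^ n) ((p / k : ℕ) : ℤ) with ⟨h1, _⟩ | ⟨h1, _⟩
        · rw [hM, h1, ← pow_succ]
          exact_mod_cast hkp
        · rw [hM, h1]
          have hkltp : k < p := lt_of_le_of_lt (Nat.le_self_pow (by omega) k) hkp
          have hndvd : ¬ (k ∣ p) := by
            intro hdvd
            rcases (Nat.Prime.eq_one_or_self_of_dvd hp k hdvd) with h | h <;> omega
          have hmod : 0 < p % k := Nat.pos_of_ne_zero fun h => hndvd (Nat.dvd_of_mod_eq_zero h)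
          have hdm := Nat.div_add_mod p k
          have hcomm : (p / k) * k = k * (p / k) := Nat.mul_comm _ _
          have : (p / k) * k < p := by omega
          exact_mod_cast this
      calc |Λ * c₀ + ∑ i, c i * r i| ≤ M * ((c₀.natAbs : ℤ) + ∑ i, ((c i).natAbs : ℤ)) := habs
        _ ≤ M * (k : ℤ) := by gcongr
        _ < p := hMk
  refine ⟨b, ?_, ?_, ?_, ?_⟩
  · intro i hdvd
    have h1 : (((r i : ℚ) / (Λ : ℚ)).den : ℤ) ∣ Λ := by
      have := Rat.den_dvd (r i) Λ
      rwa [Rat.divInt_eq_div] at this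
    have h2 : ((b i).den : ℤ) ∣ Λ := h1
    exact hΛp (dvd_trans (Int.natCast_dvd_natCast.mpr hdvd) h2)
  · intro i
    have hden : ((b i).den : ℚ) ≠ 0 := Nat.cast_ne_zero.mpr (b i).den_nz
    have hbi : b i * (Λ : ℚ) = (r i : ℚ) := div_mul_cancel₀ _ hΛQ
    have hnum : ((b i).num : ℚ) = b i * ((b i).den : ℚ) := by
      have h := Rat.num_div_den (b i)
      rwa [div_eq_iff hden] at h
    have h2 : ((b i).num : ℚ) * (Λ : ℚ) = (r i : ℚ) * ((b i).den : ℚ) := by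
      rw [hnum, ← hbi]; ring
    have h3 : (b i).num * Λ = r i * ((b i).den : ℤ) := by exact_mod_cast h2
    have h4 : (((b i).num : ℤ) : ZMod p) * (Λ : ZMod p)
        = ((Λ : ZMod p) * a i) * (((b i).den : ℕ) : ZMod p) := by
      have := congrArg (fun z : ℤ => ((z : ℤ) : ZMod p)) h3
      push_cast at this ⊢
      rw [← hrmod i]
      push_cast
      linear_combination this
    have h5 : ((((b i).num : ℤ) : ZMod p) - a i * (((b i).den : ℕ) : ZMod p)) * (Λ : ZMod p) = 0 := by
      rw [sub_mul, h4]; ring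
    rcases mul_eq_zero.mp h5 with h | h
    · have := sub_eq_zero.mp h
      exact_mod_cast this
    · exact absurd h hΛz
  · intro f hf
    obtain ⟨N, hev, hmod, hlt⟩ := key f (hL₁deg f hf) (hL₁norm f hf)
    have hN0 : N = 0 := by
      have : ((N : ℤ) : ZMod p) = 0 := by rw [hmod, hL₁ f hf, mul_zero]
      have hdvd : (p : ℤ) ∣ N := (ZMod.intCast_zmod_eq_zero_iff_dvd _ _).mp this
      rcases hdvd with ⟨m, rfl⟩
      have hp0 : (0 : ℤ) < p := by exact_mod_cast hp.pos
      rcases eq_or_ne m 0 with rfl | hm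
      · ring
      · exfalso
        have : (p : ℤ) ≤ |(p : ℤ) * m| := by
          rw [abs_mul, abs_of_pos hp0]
          nlinarith [Int.one_le_abs hm]
        omega
    rw [hev, hN0]
    simp
  · intro f hf
    obtain ⟨N, hev, hmod, _⟩ := key f (hL₂deg f hf) (hL₂norm f hf)
    have hNz : ((N : ℤ) : ZMod p) ≠ 0 := by
      rw [hmod]
      exact mul_ne_zero hΛz (hL₂ f hf)
    have hN : (N : ℚ) ≠ 0 := by
      simp only [Ne, Int.cast_eq_zero]
      intro h
      rw [h] at hNz
      simp at hNz
    rw [hev]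
    exact div_ne_zero hN hΛQ
end

section
/- Let k ≥ 1 be an integer and p a prime. For any A ⊆ Z/pZ with |A| < log_{2k}(p) − 1, there exists a set A' ⊂ Z of the same cardinality such that the canonical homomorphism Z → Z/pZ restricts to a bijection from A' onto A which is a Freiman isomorphism of order k: for any a_1,...,a_{2k} ∈ A', a_1+...+a_k = a_{k+1}+...+a_{2k} in Z if and only if the corresponding identity holds for their images in Z/pZ. -/
/-- Let `k ≥ 1` and `p` prime.  Any `A ⊆ ℤ/pℤ` with `|A| < log_{2k} p − 1` is the image,
under the canonical homomorphism `ℤ → ℤ/pℤ`, of a set `A' ⊂ ℤ` of the same cardinality,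
and this bijection is a Freiman isomorphism of order `k`: a `k`-term sum equality
`a₁ + ⋯ + a_k = a_{k+1} + ⋯ + a_{2k}` holds in `ℤ` iff it holds for the images in
`ℤ/pℤ`. -/
theorem rectification_zmod {p : ℕ} (hp : p.Prime) (k : ℕ) (hk : 1 ≤ k)
    (A : Finset (ZMod p)) (hsize : (A.card : ℝ) < Real.logb (2 * k) p - 1) :
    ∃ A' : Finset ℤ,
      A'.card = A.card ∧
      A'.image (Int.cast : ℤ → ZMod p) = A ∧
      (∀ x y : Fin k → ℤ, (∀ i, x i ∈ A') → (∀ i, y i ∈ A') →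
        ((∑ i, x i = ∑ i, y i) ↔
          (∑ i, ((x i : ZMod p)) = ∑ i, ((y i : ZMod p))))) := by
  haveI : Fact p.Prime := ⟨hp⟩
  set n := A.card with hn
  have hb : (1:ℝ) < 2 * k := by
    have : (1:ℝ) ≤ (k:ℝ) := by exact_mod_cast hk
    linarith
  have hp0 : (0:ℝ) < p := by exact_mod_cast hp.pos
  -- power bound
  have hpow : (2 * k) ^ (n + 1) < p := by
    have h1 : ((n:ℝ) + 1) < Real.logb (2*k) p := by linarith
    have h2 : ((2:ℝ) * k) ^ (((n:ℕ) + 1 : ℕ) : ℝ) < p := by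
      rw [← Real.lt_logb_iff_rpow_lt hb hp0]
      push_cast
      exact h1
    rw [Real.rpow_natCast] at h2
    exact_mod_cast h2
  have h2k0 : 0 < 2 * k := by omega
  -- pigeonhole
  have hcard : Fintype.card (A → Fin (2*k)) < Fintype.card (ZMod p) := by
    rw [Fintype.card_fun, Fintype.card_fin, Fintype.card_coe, ZMod.card]
    calc (2*k) ^ n ≤ (2*k) ^ n * (2*k) := Nat.le_mul_of_pos_right _ h2k0
    _ = (2*k) ^ (n+1) := by ring
    _ < p := hpow
  have hplt : ∀ l : ZMod p, ∀ a : ZMod p, 2*k*(l*a).val / p < 2*k := by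
    intro l a
    rw [Nat.div_lt_iff_lt_mul hp.pos]
    have := ZMod.val_lt (l*a)
    calc 2*k*(l*a).val < 2*k*p := mul_lt_mul_of_pos_left this h2k0
    _ = _ := by ring
  obtain ⟨l1, l2, hne, hfeq⟩ := Fintype.exists_ne_map_eq_of_card_lt
    (fun l : ZMod p => fun a : A => (⟨2*k*(l*a.1).val / p, hplt l a.1⟩ : Fin (2*k))) hcard
  -- the small-difference function
  set s : ZMod p → ℤ := fun a => ((l1*a).val : ℤ) - ((l2*a).val : ℤ) with hs
  have hsmall : ∀ a ∈ A, 2*k*|s a| < p := by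
    intro a ha
    have h := congrFun hfeq ⟨a, ha⟩
    have h' : 2*k*(l1*a).val / p = 2*k*(l2*a).val / p := congrArg Fin.val h
    set m1 := 2*k*(l1*a).val with hm1
    set m2 := 2*k*(l2*a).val with hm2
    have r1 : m1 % p < p := Nat.mod_lt _ hp.pos
    have r2 : m2 % p < p := Nat.mod_lt _ hp.pos
    have e1 : (m1:ℤ) = p * ((m1/p : ℕ):ℤ) + ((m1 % p : ℕ):ℤ) := by
      exact_mod_cast (Nat.div_add_mod m1 p).symm
    have e2 : (m2:ℤ) = p * ((m2/p : ℕ):ℤ) + ((m2 % p : ℕ):ℤ) := by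
      exact_mod_cast (Nat.div_add_mod m2 p).symm
    have h'' : ((m1/p : ℕ):ℤ) = ((m2/p : ℕ):ℤ) := by exact_mod_cast h'
    have key0 : ((m1:ℤ)) - m2 = ((m1 % p : ℕ):ℤ) - ((m2 % p : ℕ):ℤ) := by
      rw [e1, e2, h'']; ring
    have key2 : ((2:ℤ)*k) * s a = ((m1:ℤ)) - (m2:ℤ) := by
      rw [hs]; push_cast [hm1, hm2]; ring
    have key : ((2:ℤ)*k) * s a = (m1 % p : ℕ) - ((m2 % p : ℕ) : ℤ) := by
      rw [key2, key0]
    have : |((2:ℤ)*k) * s a| < p := by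
      rw [key, abs_sub_lt_iff]
      constructor <;>
      · push_cast
        omega
    rw [abs_mul] at this
    have h2 : |((2:ℤ)*k)| = 2*k := by
      rw [abs_of_nonneg] ; positivity
    rw [h2] at this
    exact_mod_cast this
  -- setup lam and mu
  set lam : ZMod p := l1 - l2 with hlam
  have hlamne : lam ≠ 0 := sub_ne_zero.mpr hne
  set μ : ℤ := (lam⁻¹.val : ℤ) with hmu
  have hmucast : (μ : ZMod p) = lam⁻¹ := by
    rw [hmu]; push_cast [ZMod.natCast_val, ZMod.cast_id]; rfl
  have hmune : μ ≠ 0 := by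
    rw [hmu]
    simp only [ne_eq, Int.natCast_eq_zero]
    rw [ZMod.val_eq_zero]
    exact inv_ne_zero hlamne
  have hscast : ∀ a : ZMod p, ((s a : ZMod p)) = lam * a := by
    intro a
    rw [hs]
    push_cast [ZMod.natCast_val, ZMod.cast_id]
    rw [hlam]; ring
  set g : ZMod p → ℤ := fun a => μ * s a with hg
  have hgcast : ∀ a : ZMod p, ((g a : ZMod p)) = a := by
    intro a
    rw [hg]
    push_cast
    rw [hmucast, hscast, ← mul_assoc, inv_mul_cancel₀ hlamne, one_mul]
  have hinj : Set.InjOn g A := by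
    intro a _ b _ h
    have := congrArg (fun z : ℤ => (z : ZMod p)) h
    simp only [hgcast] at this
    exact this
  refine ⟨A.image g, Finset.card_image_of_injOn hinj, ?_, ?_⟩
  · rw [Finset.image_image]
    have : (Int.cast : ℤ → ZMod p) ∘ g = id := funext hgcast
    rw [this, Finset.image_id]
  · intro x y hx hy
    have hxg : ∀ i, ∃ a ∈ A, g a = x i := by
      intro i; exact Finset.mem_image.mp (hx i)
    have hyg : ∀ i, ∃ a ∈ A, g a = y i := by
      intro i; exact Finset.mem_image.mp (hy i)
    choose a haA hax using hxg
    choose b hbA hby using hyg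
    constructor
    · intro h
      have := congrArg (fun z : ℤ => (z : ZMod p)) h
      push_cast at this
      exact this
    · intro h
      -- images are a i and b i
      have hxc : ∀ i, ((x i : ZMod p)) = a i := fun i => by rw [← hax i]; exact hgcast _
      have hyc : ∀ i, ((y i : ZMod p)) = b i := fun i => by rw [← hby i]; exact hgcast _
      have hab : ∑ i, a i = ∑ i, b i := by
        rw [← Finset.sum_congr rfl (fun i _ => hxc i), ← Finset.sum_congr rfl (fun i _ => hyc i)]
        exact h
      set d : ℤ := (∑ i, s (a i)) - (∑ i, s (b i)) with hd
      have hdvd : (p:ℤ) ∣ d := by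
        rw [← ZMod.intCast_zmod_eq_zero_iff_dvd]
        push_cast [hd, hscast]
        rw [← Finset.mul_sum, ← Finset.mul_sum, hab]
        ring
      have hbound : |d| < p := by
        have h1 : ∀ i, 2*k*|s (a i)| < p := fun i => by
          exact_mod_cast hsmall _ (haA i)
        have h2 : ∀ i, 2*k*|s (b i)| < p := fun i => by
          exact_mod_cast hsmall _ (hbA i)
        have hd1 : |d| ≤ (∑ i, |s (a i)|) + ∑ i, |s (b i)| := by
          rw [hd]
          refine (abs_sub _ _).trans ?_
          gcongr <;> exact Finset.abs_sum_le_sum_abs _ _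
        have hk1 : ∀ i : Fin k, (2:ℤ)*k*|s (a i)| ≤ p - 1 := fun i => by
          have := h1 i; push_cast at this ⊢; omega
        have hk2 : ∀ i : Fin k, (2:ℤ)*k*|s (b i)| ≤ p - 1 := fun i => by
          have := h2 i; push_cast at this ⊢; omega
        have hsum1 : (2:ℤ)*k * (∑ i, |s (a i)|) ≤ k * (p-1) := by
          rw [Finset.mul_sum]
          calc ∑ i : Fin k, (2:ℤ)*k*|s (a i)| ≤ ∑ i : Fin k, ((p:ℤ)-1) :=
            Finset.sum_le_sum (fun i _ => hk1 i)
          _ = k * (p-1) := by simp [Finset.sum_const, mul_comm]; ring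
        have hsum2 : (2:ℤ)*k * (∑ i, |s (b i)|) ≤ k * (p-1) := by
          rw [Finset.mul_sum]
          calc ∑ i : Fin k, (2:ℤ)*k*|s (b i)| ≤ ∑ i : Fin k, ((p:ℤ)-1) :=
            Finset.sum_le_sum (fun i _ => hk2 i)
          _ = k * (p-1) := by simp [Finset.sum_const, mul_comm]; ring
        have hkpos : (1:ℤ) ≤ k := by exact_mod_cast hk
        nlinarith [abs_nonneg d]
      have hd0 : d = 0 := Int.eq_zero_of_abs_lt_dvd hdvd hbound
      have hseq : (∑ i, s (a i)) = ∑ i, s (b i) := by omega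
      calc ∑ i, x i = ∑ i, g (a i) := by
            exact Finset.sum_congr rfl (fun i _ => (hax i).symm)
      _ = μ * ∑ i, s (a i) := by rw [hg, Finset.mul_sum]
      _ = μ * ∑ i, s (b i) := by rw [hseq]
      _ = ∑ i, g (b i) := by rw [hg, Finset.mul_sum]
      _ = ∑ i, y i := Finset.sum_congr rfl (fun i _ => hby i)
end

section
/- For every integer k ≥ 3 and every prime p ≥ 2^{32(k−1)^2 (log_2(16(k−1)))^2}, there exists a subset A ⊆ F_p with |A| ≤ (10/(k−1)) · log_2(p)/log_2 log_2(p) such that A is not Freiman ring-isomorphic of order k to any subset of a characteristic zero integral domain. -/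
namespace NonRect
open MvPolynomial

variable {n : ℕ}

lemma l1zero_of_not_mem (f : MvPolynomial (Fin n) ℤ) (m) (h : m ∉ f.support) : (f.coeff m).natAbs = 0 := by
  simp [MvPolynomial.notMem_support_iff.mp h]

lemma l1Norm_add_le (f g : MvPolynomial (Fin n) ℤ) : l1Norm (f + g) ≤ l1Norm f + l1Norm g := by
  unfold l1Norm
  have h1 : ∑ m ∈ (f+g).support, ((f+g).coeff m).natAbs
      ≤ ∑ m ∈ f.support ∪ g.support, ((f+g).coeff m).natAbs := by
    apply Finset.sum_le_sum_of_subset (MvPolynomial.support_add)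
  refine h1.trans ?_
  have h2 : ∑ m ∈ f.support ∪ g.support, ((f+g).coeff m).natAbs
      ≤ ∑ m ∈ f.support ∪ g.support, ((f.coeff m).natAbs + (g.coeff m).natAbs) := by
    apply Finset.sum_le_sum
    intro m _
    simpa [MvPolynomial.coeff_add] using Int.natAbs_add_le (f.coeff m) (g.coeff m)
  refine h2.trans ?_
  rw [Finset.sum_add_distrib]
  have e1 := Finset.sum_subset (Finset.subset_union_left (s₁ := f.support) (s₂ := g.support)) (fun x _ hx => l1zero_of_not_mem f x hx)
  have e2 := Finset.sum_subset (Finset.subset_union_right (s₁ := f.support) (s₂ := g.support)) (fun x _ hx => l1zero_of_not_mem g x hx)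
  omega

lemma l1Norm_neg (f : MvPolynomial (Fin n) ℤ) : l1Norm (-f) = l1Norm f := by
  unfold l1Norm
  rw [MvPolynomial.support_neg]
  exact Finset.sum_congr rfl (fun m _ => by simp)

lemma l1Norm_sub_le (f g : MvPolynomial (Fin n) ℤ) : l1Norm (f - g) ≤ l1Norm f + l1Norm g := by
  rw [sub_eq_add_neg]
  exact (l1Norm_add_le f (-g)).trans (by rw [l1Norm_neg])

lemma l1Norm_monomial (m) (c : ℤ) : l1Norm (monomial m c : MvPolynomial (Fin n) ℤ) ≤ c.natAbs := by
  unfold l1Norm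
  rcases eq_or_ne c 0 with rfl | hc
  · simp
  · rw [MvPolynomial.support_monomial, if_neg hc]
    simp

lemma l1Norm_X (i : Fin n) : l1Norm (X i : MvPolynomial (Fin n) ℤ) ≤ 1 := by
  rw [MvPolynomial.X]; exact l1Norm_monomial _ 1

lemma l1Norm_X_mul_X (i j : Fin n) : l1Norm (X i * X j : MvPolynomial (Fin n) ℤ) ≤ 1 := by
  rw [MvPolynomial.X, MvPolynomial.X, monomial_mul, one_mul]
  exact l1Norm_monomial _ 1

lemma l1Norm_C_one : l1Norm (C 1 : MvPolynomial (Fin n) ℤ) ≤ 1 := by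
  rw [MvPolynomial.C_apply]; exact l1Norm_monomial _ 1

lemma l1Norm_list_sum (l : List (MvPolynomial (Fin n) ℤ)) (d : ℕ) (h : ∀ f ∈ l, l1Norm f ≤ d) :
    l1Norm l.sum ≤ l.length * d := by
  induction l with
  | nil => simp [l1Norm]
  | cons a t ih =>
      simp only [List.sum_cons, List.length_cons]
      calc l1Norm (a + t.sum) ≤ l1Norm a + l1Norm t.sum := l1Norm_add_le _ _
        _ ≤ d + t.length * d := by
            have := ih (fun f hf => h f (List.mem_cons_of_mem _ hf))
            have := h a (List.mem_cons_self)
            omega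
        _ = (t.length + 1) * d := by ring

lemma totalDegree_list_sum (l : List (MvPolynomial (Fin n) ℤ)) (d : ℕ) (h : ∀ f ∈ l, f.totalDegree ≤ d) :
    l.sum.totalDegree ≤ d := by
  induction l with
  | nil => simp
  | cons a t ih =>
      simp only [List.sum_cons]
      refine (totalDegree_add _ _).trans ?_
      exact max_le (h a (List.mem_cons_self)) (ih (fun f hf => h f (List.mem_cons_of_mem _ hf)))

lemma totalDegree_X_mul_X (i j : Fin n) : (X i * X j : MvPolynomial (Fin n) ℤ).totalDegree ≤ 2 := by
  refine (totalDegree_mul _ _).trans ?_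
  simp [totalDegree_X]



lemma five_mul_le_pow (m : ℕ) : 5 * m ≤ 2 ^ m + 15 := by
  induction m with
  | zero => norm_num
  | succ m ih =>
      rcases le_or_gt m 2 with h | h
      · interval_cases m <;> norm_num
      · have h5 : (5:ℕ) ≤ 2 ^ m := by
          calc (5:ℕ) ≤ 2^3 := by norm_num
          _ ≤ 2^m := Nat.pow_le_pow_right (by norm_num) h
        have : 2^(m+1) = 2^m + 2^m := by ring
        omega

lemma five_log_le (n : ℕ) : 5 * Nat.log 2 n ≤ n + 15 := by
  rcases eq_or_ne n 0 with rfl | hn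
  · simp
  · have h1 : 2 ^ Nat.log 2 n ≤ n := Nat.pow_log_le_self 2 hn
    have := five_mul_le_pow (Nat.log 2 n)
    omega

lemma cube_le_pow (m : ℕ) (hm : 9 ≤ m) : (m+1)^3 ≤ 2^(m+3) := by
  induction m with
  | zero => omega
  | succ m ih =>
      rcases Nat.lt_or_ge m 9 with h | h
      · interval_cases m <;> norm_num
      · have h1 := ih h
        have h2 : (m+2)^3 ≤ 2*(m+1)^3 := by
          have hz : ((m:ℤ)+2)^3 ≤ 2*((m:ℤ)+1)^3 := by nlinarith [sq_nonneg ((m:ℤ)-3), Int.natCast_nonneg m]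
          exact_mod_cast hz
        have : 2^(m+1+3) = 2*2^(m+3) := by ring
        calc (m+1+1)^3 = (m+2)^3 := by ring
          _ ≤ 2*(m+1)^3 := h2
          _ ≤ 2*2^(m+3) := by omega
          _ = 2^(m+1+3) := by ring

lemma le_of_cube_le_cube (a b : ℕ) (h : a^3 ≤ b^3) : a ≤ b := by
  by_contra hc
  push_neg at hc
  exact absurd h (not_le.mpr (Nat.pow_lt_pow_left hc (by norm_num)))

/-- Main parameter estimates. `q = k-1`, `ℓ = ⌊log₂ p⌋`. -/
lemma params (q ℓ : ℕ) (hq : 2 ≤ q) (hℓ : 32*q^2*(Nat.log 2 q + 4)^2 ≤ ℓ) :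
    1 ≤ Nat.log 2 (2*ℓ/(q*(Nat.log 2 ℓ+1))) ∧
    (ℓ / (Nat.log 2 (2*ℓ/(q*(Nat.log 2 ℓ+1)))) + 1
       ≤ (q-1) * ((ℓ / (Nat.log 2 (2*ℓ/(q*(Nat.log 2 ℓ+1)))) + 1 + (q-2))/(q-1))) ∧
    q*(Nat.log 2 ℓ+1)*(2^(Nat.log 2 (2*ℓ/(q*(Nat.log 2 ℓ+1)))) + (q-2)
       + (ℓ / (Nat.log 2 (2*ℓ/(q*(Nat.log 2 ℓ+1)))) + 1 + (q-2))/(q-1)) ≤ 10*ℓ := by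
  set z := Nat.log 2 q with hzdef
  set lam := Nat.log 2 ℓ with hlamdef
  have hz1 : 1 ≤ z := (Nat.le_log_iff_pow_le (by norm_num) (by omega)).mpr (by simpa using hq)
  have hw2 : 2 ≤ Nat.log 2 (z+4) := (Nat.le_log_iff_pow_le (by norm_num) (by omega)).mpr (by omega)
  set w := Nat.log 2 (z+4) with hwdef
  have h2z : 2^z ≤ q := Nat.pow_log_le_self 2 (by omega)
  have h2w : 2^w ≤ z+4 := Nat.pow_log_le_self 2 (by omega)
  have hℓ1 : 2^(2*z+9) ≤ ℓ := by
    calc 2^(2*z+9) = 32 * (2^z)^2 * (2^2)^2 := by ring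
    _ ≤ 32 * q^2 * (z+4)^2 := by
        have h1 : (2^z)^2 ≤ q^2 := Nat.pow_le_pow_left h2z 2
        have h2 : ((2:ℕ)^2)^2 ≤ (z+4)^2 := Nat.pow_le_pow_left (by omega) 2
        calc 32 * (2^z)^2 * (2^2)^2 ≤ 32 * q^2 * (2^2)^2 := by
              exact Nat.mul_le_mul_right _ (Nat.mul_le_mul_left _ h1)
        _ ≤ 32 * q^2 * (z+4)^2 := Nat.mul_le_mul_left _ h2
    _ ≤ ℓ := hℓ
  have hℓpos : 0 < ℓ := lt_of_lt_of_le (Nat.pow_pos (by norm_num)) hℓ1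
  have hlam29 : 2*z+9 ≤ lam := (Nat.le_log_iff_pow_le (by norm_num) (by omega)).mpr hℓ1
  have hlam11 : 11 ≤ lam := by omega
  have h2lam : 2^lam ≤ ℓ := Nat.pow_log_le_self 2 (by omega)
  -- I2
  have hI2 : q^2*(lam+1) ≤ 2*ℓ := by
    rcases le_or_gt (65536*q^3) ℓ with hcase | hcase
    · have hcube : (lam+1)^3 ≤ 8*ℓ := by
        calc (lam+1)^3 ≤ 2^(lam+3) := cube_le_pow lam (by omega)
        _ = 8 * 2^lam := by ring
        _ ≤ 8*ℓ := by omega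
      have hbig : 4294967296*(q^2*(lam+1))^3 ≤ 4294967296*(2*ℓ)^3 := by
        calc 4294967296*(q^2*(lam+1))^3 = (65536*q^3)^2*(lam+1)^3 := by ring
        _ ≤ ℓ^2*(8*ℓ) := Nat.mul_le_mul (Nat.pow_le_pow_left hcase 2) hcube
        _ = 8*ℓ^3 := by ring
        _ ≤ 4294967296*(2*ℓ)^3 := by nlinarith [Nat.zero_le (ℓ^3)]
      have := Nat.le_of_mul_le_mul_left hbig (by norm_num)
      exact le_of_cube_le_cube _ _ this
    · have hq' : q < 2^(z+1) := Nat.lt_pow_succ_log_self (by norm_num) q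
      have hℓ' : ℓ < 2^(3*z+19) := by
        calc ℓ < 65536*q^3 := hcase
        _ ≤ 65536*(2^(z+1))^3 := by
            have := Nat.pow_le_pow_left (le_of_lt hq') 3
            exact Nat.mul_le_mul_left _ this
        _ = 2^(3*z+19) := by ring
      have hlam' : lam < 3*z+19 := Nat.log_lt_of_lt_pow (by omega) hℓ'
      calc q^2*(lam+1) ≤ q^2*(64*(z+4)) := Nat.mul_le_mul_left _ (by omega)
      _ ≤ q^2*(64*(z+4)^2) := by
          have : (z+4) ≤ (z+4)^2 := by nlinarith
          exact Nat.mul_le_mul_left _ (by omega)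
      _ = 2*(32*q^2*(z+4)^2) := by ring
      _ ≤ 2*ℓ := by omega
  have hql : q*(lam+1) ≤ ℓ := by
    have : 2*(q*(lam+1)) ≤ q^2*(lam+1) := by
      have : 2*q ≤ q*q := Nat.mul_le_mul_right q hq
      calc 2*(q*(lam+1)) = (2*q)*(lam+1) := by ring
      _ ≤ (q*q)*(lam+1) := Nat.mul_le_mul_right _ this
      _ = q^2*(lam+1) := by ring
    omega
  -- t₀ and c
  set t0 := 2*ℓ/(q*(lam+1)) with ht0def
  have ht2 : 2 ≤ t0 := by
    rw [ht0def]
    rw [Nat.le_div_iff_mul_le (by positivity)]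
    omega
  set c := Nat.log 2 t0 with hcdef
  have hc1 : 1 ≤ c := (Nat.le_log_iff_pow_le (by norm_num) (by omega)).mpr (by simpa using ht2)
  have h2c : 2^c ≤ t0 := Nat.pow_log_le_self 2 (by omega)
  have hI1 : q*(lam+1)*2^c ≤ 2*ℓ := by
    calc q*(lam+1)*2^c ≤ q*(lam+1)*t0 := Nat.mul_le_mul_left _ h2c
    _ ≤ 2*ℓ := Nat.mul_div_le (2*ℓ) (q*(lam+1))
  -- key lower bound on c
  set G := Nat.log 2 (lam+1) with hGdef
  have hG : 5*G ≤ lam+16 := by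
    have := five_log_le (lam+1); omega
  have hkey0 : lam + 1 ≤ c + z + G + 2 := by
    have hmul : q*(lam+1) ≤ 2^(z+G+2) := by
      have h1 : q ≤ 2^(z+1) := le_of_lt (Nat.lt_pow_succ_log_self (by norm_num) q)
      have h2 : lam+1 ≤ 2^(G+1) := le_of_lt (Nat.lt_pow_succ_log_self (by norm_num) (lam+1))
      calc q*(lam+1) ≤ 2^(z+1)*2^(G+1) := Nat.mul_le_mul h1 h2
      _ = 2^(z+G+2) := by rw [← pow_add]; ring_nf
    rcases le_or_gt (lam+1) (z+G+2) with h | h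
    · omega
    · have hdiv : 2^(lam+1) / 2^(z+G+2) ≤ t0 := by
        have h1 : 2^(lam+1) ≤ 2*ℓ := by
          have : 2^(lam+1) = 2*2^lam := by ring
          omega
        calc 2^(lam+1) / 2^(z+G+2) ≤ 2*ℓ / 2^(z+G+2) := Nat.div_le_div_right h1
        _ ≤ 2*ℓ / (q*(lam+1)) := Nat.div_le_div_left hmul (by positivity)
      rw [Nat.pow_div (by omega) (by norm_num)] at hdiv
      have : lam+1-(z+G+2) ≤ c := (Nat.le_log_iff_pow_le (by norm_num) (by omega)).mpr hdiv
      omega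
  -- I3 : q*(lam+1) ≤ 5*(q-1)*c
  have hI3 : q*(lam+1) ≤ 5*((q-1)*c) := by
    rcases eq_or_lt_of_le hq with hq2 | hq3
    · -- q = 2
      have hz' : z = 1 := by
        have h' : Nat.log 2 q < 2 := Nat.log_lt_of_lt_pow (by omega) (by rw [← hq2]; norm_num)
        omega
      have h25 : 2*(lam+1) ≤ 5*c := by
        rcases le_or_gt lam 14 with h | h
        · have hGle : G < 4 := Nat.log_lt_of_lt_pow (by omega) (by omega)
          omega
        · omega
      calc q*(lam+1) = 2*(lam+1) := by rw [← hq2]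
      _ ≤ 5*c := h25
      _ = 5*((2-1)*c) := by ring
      _ = 5*((q-1)*c) := by rw [← hq2]
    · -- q ≥ 3
      have h310 : 3*(lam+1) ≤ 10*c := by omega
      have hs : 3*(q*(lam+1)) ≤ 3*(5*((q-1)*c)) := by
        calc 3*(q*(lam+1)) = q*(3*(lam+1)) := by ring
        _ ≤ q*(10*c) := Nat.mul_le_mul_left _ h310
        _ = (10*q)*c := by ring
        _ ≤ (15*(q-1))*c := Nat.mul_le_mul_right _ (by omega)
        _ = 3*(5*((q-1)*c)) := by ring
      omega
  -- m'
  set nd := ℓ / c + 1 with hnddef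
  set m' := (nd + (q-2))/(q-1) with hmdef
  have hm1 : nd ≤ (q-1)*m' := by
    have hdm : (q-1) * m' + (nd + (q-2)) % (q-1) = nd + (q-2) := by
      rw [hmdef]; exact Nat.div_add_mod _ _
    have hmod : (nd + (q-2)) % (q-1) < q-1 := Nat.mod_lt _ (by omega)
    omega
  have hP3 : q*(lam+1)*m' ≤ 6*ℓ := by
    have h1 : (q-1)*m' ≤ nd + (q-2) := by rw [hmdef]; exact Nat.mul_div_le _ _
    have h2 : q*(lam+1)*((q-1)*m') ≤ q*(lam+1)*(ℓ/c) + q*(lam+1)*(q-1) := by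
      calc q*(lam+1)*((q-1)*m') ≤ q*(lam+1)*(nd + (q-2)) := Nat.mul_le_mul_left _ h1
      _ = q*(lam+1)*(ℓ/c) + q*(lam+1)*(q-1) := by
            have hnd2 : nd + (q-2) = ℓ/c + (q-1) := by omega
            rw [hnd2, Nat.mul_add]
    have h3 : q*(lam+1)*(ℓ/c) ≤ 5*((q-1)*ℓ) := by
      calc q*(lam+1)*(ℓ/c) ≤ (5*((q-1)*c))*(ℓ/c) := Nat.mul_le_mul_right _ hI3
      _ = 5*(q-1)*(c*(ℓ/c)) := by ring
      _ ≤ 5*(q-1)*ℓ := Nat.mul_le_mul_left _ (Nat.mul_div_le ℓ c)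
      _ = 5*((q-1)*ℓ) := by ring
    have h4 : q*(lam+1)*(q-1) ≤ (q-1)*ℓ := by
      calc q*(lam+1)*(q-1) = (q*(lam+1))*(q-1) := by ring
      _ ≤ ℓ*(q-1) := Nat.mul_le_mul_right _ hql
      _ = (q-1)*ℓ := by ring
    have h5 : (q*(lam+1)*m')*(q-1) ≤ (6*ℓ)*(q-1) := by
      calc (q*(lam+1)*m')*(q-1) = q*(lam+1)*((q-1)*m') := by ring
      _ ≤ q*(lam+1)*(ℓ/c) + q*(lam+1)*(q-1) := h2
      _ ≤ 5*((q-1)*ℓ) + (q-1)*ℓ := by omega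
      _ = (6*ℓ)*(q-1) := by ring
    exact Nat.le_of_mul_le_mul_right h5 (by omega)
  have hP2 : q*(lam+1)*(q-2) ≤ 2*ℓ := by
    calc q*(lam+1)*(q-2) ≤ q*(lam+1)*q := Nat.mul_le_mul_left _ (by omega)
    _ = q^2*(lam+1) := by ring
    _ ≤ 2*ℓ := hI2
  refine ⟨hc1, hm1, ?_⟩
  calc q*(lam+1)*(2^c + (q-2) + m')
      = q*(lam+1)*2^c + q*(lam+1)*(q-2) + q*(lam+1)*m' := by ring
  _ ≤ 2*ℓ + 2*ℓ + 6*ℓ := by omega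
  _ = 10*ℓ := by ring



def chainVal (p q c m' i : ℕ) : ℕ :=
  if i < 2^c then i + 1
  else if i < 2^c + (q-2) then 2^(c*(i - 2^c + 2))
  else p / 2^(c*((q-1)*(m' - 1 - (i - (2^c + (q-2))))))

def powIdx (c t : ℕ) : ℕ := if t = 0 then 0 else if t = 1 then 2^c - 1 else 2^c + (t-2)

def chainRel (p q c m' i : ℕ) : List (ℕ × ℕ) :=
  if i < 2^c then [(i-1, 0), (0, 0)]
  else if i < 2^c + (q-2) then (if i = 2^c then [(2^c-1, 2^c-1)] else [(i-1, 2^c-1)])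
  else
    (if i - (2^c + (q-2)) = 0 then [] else [(i - 1, powIdx c (q-1))]) ++
    ((List.range (q-1)).filterMap (fun t =>
      let d := p / 2^(c*((q-1)*(m' - 1 - (i - (2^c + (q-2)))) + t)) % 2^c;
      if d = 0 then none else some (d - 1, powIdx c t)))

section
variable (p q c m' : ℕ)

lemma chainVal_table {i : ℕ} (h : i < 2^c) : chainVal p q c m' i = i + 1 := by
  rw [chainVal, if_pos h]

lemma chainVal_zero : chainVal p q c m' 0 = 1 := by
  rw [chainVal_table]; positivity

lemma chainVal_powstage {t : ℕ} (ht : t < q-2) :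
    chainVal p q c m' (2^c + t) = 2^(c*(t+2)) := by
  rw [chainVal, if_neg (by omega), if_pos (by omega)]
  congr 2
  omega

lemma chainVal_horner {r : ℕ} :
    chainVal p q c m' (2^c + (q-2) + r) = p / 2^(c*((q-1)*(m' - 1 - r))) := by
  rw [chainVal, if_neg (by omega), if_neg (by omega)]
  congr 4
  omega

lemma powIdx_lt (hq : 2 ≤ q) (hc : 1 ≤ c) {t : ℕ} (ht : t ≤ q-1) :
    powIdx c t < 2^c + (q-2) := by
  rw [powIdx]
  have h2 : 1 ≤ 2^c := Nat.one_le_two_pow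
  split_ifs <;> omega

lemma chainVal_powIdx (hq : 2 ≤ q) (hc : 1 ≤ c) {t : ℕ} (ht : t ≤ q-1) :
    chainVal p q c m' (powIdx c t) = 2^(c*t) := by
  rw [powIdx]
  have h2 : 1 ≤ 2^c := Nat.one_le_two_pow
  split_ifs with h0 h1
  · subst h0; simp [chainVal_zero]
  · subst h1
    rw [chainVal_table p q c m' (by omega), mul_one]
    omega
  · rw [chainVal_powstage p q c m' (by omega)]
    congr 2
    omega

lemma mod_pow_list (B s n : ℕ) :
    n % B^s = ((List.range s).map (fun t => n / B^t % B * B^t)).sum := by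
  induction s with
  | zero => simp [Nat.mod_one]
  | succ s ih =>
      rw [List.range_succ, List.map_append, List.sum_append, ← ih]
      simp [Nat.mod_pow_succ]
      ring

lemma sum_filterMap {α β : Type} (l : List α) (g : α → Option β) (F : β → ℕ) :
    ((l.filterMap g).map F).sum = (l.map (fun t => ((g t).map F).getD 0)).sum := by
  induction l with
  | nil => simp
  | cons a tl ih =>
      rw [List.filterMap_cons]
      cases hg : g a <;> simp [hg, ih]


lemma digit_mem (hq : 2 ≤ q) (hc : 1 ≤ c) {e : ℕ} {su : ℕ × ℕ}
    (hsu : su ∈ (List.range (q-1)).filterMap (fun t =>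
      let d := p / 2^(c*(e + t)) % 2^c;
      if d = 0 then none else some (d - 1, powIdx c t))) :
    su.1 + 1 < 2^c + (q-2) ∧ su.2 < 2^c + (q-2) := by
  rw [List.mem_filterMap] at hsu
  obtain ⟨t, ht, hsome⟩ := hsu
  rw [List.mem_range] at ht
  simp only at hsome
  split_ifs at hsome with h5'
  simp only [Option.some_inj] at hsome
  have hd : p / 2^(c*(e + t)) % 2^c < 2^c := Nat.mod_lt _ (by positivity)
  have hpl := powIdx_lt q c hq hc (t := t) (by omega)
  subst hsome
  refine ⟨?_, ?_⟩
  · show p / 2^(c*(e + t)) % 2^c - 1 + 1 < 2^c + (q-2)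
    omega
  · show powIdx c t < 2^c + (q-2)
    exact hpl

lemma chainRel_mem_lt (hq : 2 ≤ q) (hc : 1 ≤ c) {i : ℕ} (hi1 : 1 ≤ i) :
    ∀ su ∈ chainRel p q c m' i, su.1 < i ∧ su.2 < i := by
  intro su hsu
  rw [chainRel] at hsu
  have h2 : 1 ≤ 2^c := Nat.one_le_two_pow
  split_ifs at hsu with h1' h2' h3' h4'
  · simp at hsu
    rcases hsu with rfl | rfl <;> simp <;> omega
  · simp at hsu; subst hsu; simp; omega
  · simp at hsu; subst hsu; simp; omega
  · rw [List.nil_append] at hsu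
    have := digit_mem p q c hq hc hsu
    omega
  · rw [List.singleton_append, List.mem_cons] at hsu
    rcases hsu with rfl | hsu
    · have := powIdx_lt q c hq hc (t := q-1) le_rfl
      constructor
      · simp; omega
      · simp; omega
    · have := digit_mem p q c hq hc hsu
      omega

lemma chainRel_length (hq : 2 ≤ q) (i : ℕ) : (chainRel p q c m' i).length ≤ q := by
  rw [chainRel]
  have hf := List.length_filterMap_le (fun t =>
    (if p / 2^(c*((q-1)*(m' - 1 - (i - (2^c + (q-2)))) + t)) % 2^c = 0 then none
     else some ((p / 2^(c*((q-1)*(m' - 1 - (i - (2^c + (q-2)))) + t)) % 2^c) - 1, powIdx c t)))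
    (List.range (q-1))
  simp only [List.length_range] at hf
  split_ifs with h1' h2' h3' h4' <;>
    simp only [List.length_append, List.length_cons, List.length_nil, List.length_singleton] <;>
    omega

lemma digit_sum (hq : 2 ≤ q) (hc : 1 ≤ c) (e : ℕ) :
    (((List.range (q-1)).filterMap (fun t =>
        let d := p / 2^(c*(e + t)) % 2^c;
        if d = 0 then none else some (d - 1, powIdx c t))).map
      (fun su => chainVal p q c m' su.1 * chainVal p q c m' su.2)).sum
    = (p / 2^(c*e)) % (2^c)^(q-1) := by
  rw [sum_filterMap, mod_pow_list (2^c) (q-1) (p / 2^(c*e))]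
  apply congrArg List.sum
  apply List.map_congr_left
  intro t ht
  rw [List.mem_range] at ht
  have key : p / 2^(c*e) / (2^c)^t = p / 2^(c*(e+t)) := by
    rw [← pow_mul, Nat.div_div_eq_div_mul, ← pow_add, ← Nat.mul_add]
  rw [key]
  simp only
  split_ifs with hd0
  · simp [hd0]
  · have hd : p / 2^(c*(e + t)) % 2^c < 2^c := Nat.mod_lt _ (by positivity)
    simp only [Option.map_some, Option.getD_some]
    rw [chainVal_table p q c m' (show p / 2^(c*(e + t)) % 2^c - 1 < 2^c by omega)]
    rw [chainVal_powIdx p q c m' hq hc (show t ≤ q-1 by omega)]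
    rw [← pow_mul]
    congr 1
    omega

lemma chainRel_sum (hq : 2 ≤ q) (hc : 1 ≤ c) (hm' : 1 ≤ m')
    (hpm : p < 2^(c*((q-1)*m'))) {i : ℕ} (hi1 : 1 ≤ i) (hiN : i < 2^c + (q-2) + m') :
    chainVal p q c m' i
      = ((chainRel p q c m' i).map
          (fun su => chainVal p q c m' su.1 * chainVal p q c m' su.2)).sum := by
  obtain ⟨m'', rfl⟩ : ∃ m'', m' = m''+1 := ⟨m'-1, by omega⟩
  have h2 : 1 ≤ 2^c := Nat.one_le_two_pow
  rw [chainRel]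
  split_ifs with h1' h2' h3' h4'
  · -- table stage
    rw [chainVal_table p q _ _ h1']
    simp only [List.map_cons, List.map_nil, List.sum_cons, List.sum_nil]
    rw [chainVal_table p q _ _ (show i-1 < 2^c by omega), chainVal_zero]
    omega
  · -- i = 2^c
    subst h3'
    have hq3 : 2 < q := by omega
    have := chainVal_powstage p q c (m''+1) (t := 0) (by omega)
    rw [show 2^c + 0 = 2^c by omega] at this
    rw [this]
    simp only [List.map_cons, List.map_nil, List.sum_cons, List.sum_nil]
    rw [chainVal_table p q _ _ (show 2^c-1 < 2^c by omega)]
    have : 2^c - 1 + 1 = 2^c := by omega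
    rw [this, ← pow_add]
    rw [show c*(0+2) = c + c by ring]
    omega
  · -- 2^c < i < 2^c + (q-2)
    obtain ⟨t, rfl⟩ : ∃ t, i = 2^c + (t+1) := ⟨i - 2^c - 1, by omega⟩
    have ht : t + 1 < q - 2 := by omega
    rw [chainVal_powstage p q c (m''+1) ht]
    simp only [List.map_cons, List.map_nil, List.sum_cons, List.sum_nil]
    have hprev : 2^c + (t+1) - 1 = 2^c + t := by omega
    rw [hprev, chainVal_powstage p q c (m''+1) (show t < q-2 by omega)]
    rw [chainVal_table p q _ _ (show 2^c-1 < 2^c by omega)]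
    have h1 : 2^c - 1 + 1 = 2^c := by omega
    rw [h1, ← pow_add]
    have hee : c*(t+2) + c = c*(t+1+2) := by ring
    rw [hee]
    omega
  · -- horner, r = 0
    have hieq : i = 2^c + (q-2) := by omega
    subst hieq
    rw [List.nil_append]
    have hred : 2^c + (q-2) - (2^c + (q-2)) = 0 := by omega
    rw [hred]
    rw [digit_sum p q c (m''+1) hq hc ((q-1)*(m''+1-1-0))]
    have hval := chainVal_horner p q c (m''+1) (r := 0)
    rw [show 2^c + (q-2) + 0 = 2^c + (q-2) by omega] at hval
    rw [hval]
    symm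
    apply Nat.mod_eq_of_lt
    rw [Nat.div_lt_iff_lt_mul (by positivity), ← pow_mul, ← pow_add]
    calc p < 2^(c*((q-1)*(m''+1))) := hpm
    _ = 2^(c*(q-1) + c*((q-1)*(m''+1-1-0))) := by
        congr 1
        simp only [Nat.add_sub_cancel, Nat.sub_zero]
        ring
  · -- horner, r ≥ 1
    obtain ⟨r, rfl⟩ : ∃ r, i = 2^c + (q-2) + (r+1) := ⟨i - (2^c + (q-2)) - 1, by omega⟩
    have hrm : r + 1 < m''+1 := by omega
    have hred : 2^c + (q-2) + (r+1) - (2^c + (q-2)) = r+1 := by omega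
    rw [hred]
    rw [List.singleton_append, List.map_cons, List.sum_cons]
    rw [digit_sum p q c (m''+1) hq hc ((q-1)*(m''+1-1-(r+1)))]
    have hval := chainVal_horner p q c (m''+1) (r := r+1)
    rw [hval]
    have hprev : 2^c + (q-2) + (r+1) - 1 = 2^c + (q-2) + r := by omega
    rw [hprev, chainVal_horner p q c (m''+1) (r := r)]
    rw [chainVal_powIdx p q c (m''+1) hq hc (le_refl (q-1))]
    have hexp : c*((q-1)*(m''+1-1-r)) = c*((q-1)*(m''+1-1-(r+1))) + c*(q-1) := by
      have h1 : m''+1-1-r = (m''+1-1-(r+1)) + 1 := by omega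
      rw [h1]
      ring
    rw [hexp]
    have hsplit : (2:ℕ)^(c*((q-1)*(m''+1-1-(r+1))) + c*(q-1))
        = 2^(c*((q-1)*(m''+1-1-(r+1)))) * (2^c)^(q-1) := by
      rw [pow_add, pow_mul 2 c (q-1)]
    have hKpow : (2:ℕ)^(c*(q-1)) = (2^c)^(q-1) := pow_mul 2 c (q-1)
    rw [hsplit, ← Nat.div_div_eq_div_mul, hKpow]
    have hdam := Nat.div_add_mod (p / 2^(c*((q-1)*(m''+1-1-(r+1))))) ((2^c)^(q-1))
    rw [Nat.mul_comm] at hdam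
    exact hdam.symm

end

lemma cast_pair_sum {S : Type} [CommSemiring S] (v : ℕ → ℕ) (l : List (ℕ×ℕ)) :
    (((l.map (fun su => v su.1 * v su.2)).sum : ℕ) : S)
      = (l.map (fun su => ((v su.1 : ℕ) : S) * ((v su.2 : ℕ) : S))).sum := by
  induction l with
  | nil => simp
  | cons x t ih => push_cast [List.map_cons, List.sum_cons, ← ih]; push_cast; ring

end NonRect


open NonRect MvPolynomial in
/-- For every `k ≥ 3` and every prime `p ≥ 2^{32 (k−1)² (log₂ (16(k−1)))²}` there is a set
`A ⊆ F_p` with `|A| ≤ (10/(k−1)) log₂ p / log₂ log₂ p` which is not Freiman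
ring-isomorphic of order `k` to any subset of a characteristic-zero integral domain: for
every enumeration `a` of `A`, every characteristic-zero integral domain `R` and every
injection `b` into `R`, some integer polynomial of degree at most `k` and ℓ1-norm at most
`k` vanishes at `a` but not at `b`, or vice versa. -/
theorem exists_nonrectifiable_set {k p : ℕ} (hk : 3 ≤ k) (hp : p.Prime)
    (hsize : (2 : ℝ) ^ (32 * ((k : ℝ) - 1) ^ 2 * (Real.logb 2 (16 * ((k : ℝ) - 1))) ^ 2) ≤ p) :
    ∃ A : Finset (ZMod p),
      (A.card : ℝ) ≤ (10 / ((k : ℝ) - 1)) * (Real.logb 2 p / Real.logb 2 (Real.logb 2 p)) ∧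
      ∀ (R : Type) [CommRing R] [IsDomain R] [CharZero R],
        ∀ (n : ℕ) (a : Fin n → ZMod p) (b : Fin n → R),
          Function.Injective a → Set.range a = ↑A → Function.Injective b →
          ∃ f : MvPolynomial (Fin n) ℤ, f.totalDegree ≤ k ∧ l1Norm f ≤ k ∧
            ¬ (MvPolynomial.aeval a f = 0 ↔ MvPolynomial.aeval b f = 0) := by
  classical
  have hp2 : 2 ≤ p := hp.two_le
  set q := k - 1 with hqdef
  have hq : 2 ≤ q := by omega
  have hkq : k = q + 1 := by omega
  have hkR : (k : ℝ) - 1 = (q : ℝ) := by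
    rw [hqdef, Nat.cast_sub (by omega)]; norm_num
  set z := Nat.log 2 q with hzdef
  set ℓ := Nat.log 2 p with hldef
  -- step 1 : the size hypothesis in ℕ
  have hℓ : 32*q^2*(z+4)^2 ≤ ℓ := by
    have h2z : (2:ℕ)^z ≤ q := Nat.pow_log_le_self 2 (by omega)
    have hlogb : ((z:ℝ)+4) ≤ Real.logb 2 (16*(q:ℝ)) := by
      have h1 : (2:ℝ)^((z+4 : ℕ)) ≤ 16*(q:ℝ) := by
        have : ((2:ℝ))^((z+4:ℕ)) = 16 * (2:ℝ)^z := by rw [pow_add]; norm_num; ring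
        rw [this]
        have : ((2:ℝ))^z ≤ (q:ℝ) := by exact_mod_cast h2z
        nlinarith
      calc ((z:ℝ)+4) = Real.logb 2 ((2:ℝ)^((z+4:ℕ))) := by
            rw [Real.logb_pow, Real.logb_self_eq_one (by norm_num : (1:ℝ) < 2)]
            push_cast; ring
      _ ≤ Real.logb 2 (16*(q:ℝ)) := by
            apply Real.logb_le_logb_of_le (by norm_num : (1:ℝ) < 2) (by positivity) h1
    have hcast : ((32*q^2*(z+4)^2 : ℕ) : ℝ) ≤ 32 * ((k:ℝ)-1)^2 * (Real.logb 2 (16*((k:ℝ)-1)))^2 := by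
      rw [hkR]
      push_cast
      have h1 : ((z:ℝ)+4)^2 ≤ (Real.logb 2 (16*(q:ℝ)))^2 := by
        have h0 : (0:ℝ) ≤ (z:ℝ)+4 := by positivity
        nlinarith [hlogb, h0]
      nlinarith [sq_nonneg ((q:ℝ)), (Nat.cast_nonneg q : (0:ℝ) ≤ (q:ℝ))]
    have hple : ((2:ℕ)^(32*q^2*(z+4)^2) : ℝ) ≤ (p:ℝ) := by
      calc ((2:ℕ)^(32*q^2*(z+4)^2) : ℝ) = (2:ℝ) ^ (((32*q^2*(z+4)^2 : ℕ)):ℝ) := by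
            rw [Real.rpow_natCast]; push_cast; ring
      _ ≤ (2:ℝ) ^ (32 * ((k:ℝ)-1)^2 * (Real.logb 2 (16*((k:ℝ)-1)))^2) := by
            apply Real.rpow_le_rpow_left_iff (by norm_num : (1:ℝ) < 2) |>.mpr hcast
      _ ≤ (p:ℝ) := hsize
    have : (2:ℕ)^(32*q^2*(z+4)^2) ≤ p := by exact_mod_cast hple
    exact (Nat.le_log_iff_pow_le (by norm_num) (by omega)).mpr this
  -- step 2 : parameters
  obtain ⟨hc1, hm1, hmaster⟩ := params q ℓ hq hℓ
  set lam := Nat.log 2 ℓ with hlamdef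
  set c := Nat.log 2 (2*ℓ/(q*(lam+1))) with hcdef
  set m' := (ℓ/c + 1 + (q-2))/(q-1) with hmdef
  set N := 2^c + (q-2) + m' with hNdef
  -- step 3 : chain well-formedness
  have hm'1 : 1 ≤ m' := by
    rw [hmdef]
    refine Nat.div_pos ?_ (by omega)
    have h := Nat.zero_le (ℓ/c)
    omega
  have hℓpos : 0 < ℓ := by
    have : 0 < 32*q^2*(z+4)^2 := by positivity
    omega
  have hℓ2 : 2 ≤ ℓ := by
    have h1 : 1 ≤ q^2 := Nat.one_le_pow _ _ (by omega)
    have h2 : 1 ≤ (z+4)^2 := Nat.one_le_pow _ _ (by omega)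
    have h32 : 32*1*1 ≤ 32*q^2*(z+4)^2 :=
      Nat.mul_le_mul (Nat.mul_le_mul_left 32 h1) h2
    omega
  have hpm : p < 2^(c*((q-1)*m')) := by
    have h1 : p < 2^(ℓ+1) := Nat.lt_pow_succ_log_self (by norm_num) p
    have h2 : ℓ + 1 ≤ c*(ℓ/c + 1) := by
      have hdm := Nat.div_add_mod ℓ c
      have hmod : ℓ % c < c := Nat.mod_lt _ (by omega)
      have hmul : c*(ℓ/c + 1) = c*(ℓ/c) + c := by ring
      omega
    have h3 : c*(ℓ/c + 1) ≤ c*((q-1)*m') := Nat.mul_le_mul_left _ hm1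
    calc p < 2^(ℓ+1) := h1
    _ ≤ 2^(c*((q-1)*m')) := Nat.pow_le_pow_right (by norm_num) (le_trans h2 h3)
  set N := 2^c + (q-2) + m' with hNdef
  have h2cge : 1 ≤ 2^c := Nat.one_le_two_pow
  have hN1 : 1 ≤ N := by omega
  refine ⟨(Finset.range N).image (fun i => ((chainVal p q c m' i : ℕ) : ZMod p)), ?_, ?_⟩
  · -- cardinality bound
    have hcard : ((Finset.range N).image fun i => ((chainVal p q c m' i:ℕ):ZMod p)).card ≤ N :=
      le_trans Finset.card_image_le (by simp)
    have hLl : ((ℓ:ℝ)) ≤ Real.logb 2 p := by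
      have := Real.natLog_le_logb p 2
      simpa [hldef] using this
    have hL2 : (2:ℝ) ≤ Real.logb 2 p := le_trans (by exact_mod_cast hℓ2) hLl
    have hLpos : (0:ℝ) < Real.logb 2 p := by linarith
    have hLLpos : (0:ℝ) < Real.logb 2 (Real.logb 2 p) := by
      apply Real.logb_pos (by norm_num)
      linarith
    have hLL_le : Real.logb 2 (Real.logb 2 p) ≤ (lam:ℝ) + 1 := by
      have hplt : p < 2^(ℓ+1) := Nat.lt_pow_succ_log_self (by norm_num) p
      have hllt : ℓ + 1 ≤ 2^(lam+1) := Nat.lt_pow_succ_log_self (by norm_num) ℓ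
      have h1 : Real.logb 2 p ≤ ((ℓ:ℝ)+1) := by
        have hcast : (p:ℝ) ≤ ((2:ℝ))^((ℓ+1 : ℕ)) := by exact_mod_cast hplt.le
        calc Real.logb 2 p ≤ Real.logb 2 (((2:ℝ))^((ℓ+1:ℕ))) :=
              Real.logb_le_logb_of_le (by norm_num : (1:ℝ) < 2) (by positivity) hcast
        _ = ((ℓ:ℝ)+1) := by
              rw [Real.logb_pow, Real.logb_self_eq_one (by norm_num : (1:ℝ) < 2)]
              push_cast; ring
      have h2 : ((ℓ:ℝ)+1) ≤ ((2:ℝ))^((lam+1 : ℕ)) := by exact_mod_cast hllt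
      calc Real.logb 2 (Real.logb 2 p) ≤ Real.logb 2 (((2:ℝ))^((lam+1:ℕ))) :=
            Real.logb_le_logb_of_le (by norm_num : (1:ℝ) < 2) hLpos (h1.trans h2)
      _ = ((lam:ℝ)+1) := by
            rw [Real.logb_pow, Real.logb_self_eq_one (by norm_num : (1:ℝ) < 2)]
            push_cast; ring
    have hmR : ((q:ℝ))*((lam:ℝ)+1)*(N:ℝ) ≤ 10*(ℓ:ℝ) := by exact_mod_cast hmaster
    have hqpos : (0:ℝ) < (q:ℝ) := by exact_mod_cast (by omega : 0 < q)
    have hcardR : (((Finset.range N).image fun i => ((chainVal p q c m' i:ℕ):ZMod p)).card : ℝ) ≤ (N:ℝ) := by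
      exact_mod_cast hcard
    rw [hkR]
    have hgoal2 : (N:ℝ) ≤ 10*Real.logb 2 p/((q:ℝ)*Real.logb 2 (Real.logb 2 p)) := by
      rw [le_div_iff₀ (by positivity)]
      have hNnn : (0:ℝ) ≤ (N:ℝ) := by positivity
      calc (N:ℝ)*((q:ℝ)*Real.logb 2 (Real.logb 2 p))
          ≤ (N:ℝ)*((q:ℝ)*((lam:ℝ)+1)) := by
            apply mul_le_mul_of_nonneg_left _ hNnn
            apply mul_le_mul_of_nonneg_left hLL_le (le_of_lt hqpos)
      _ = (q:ℝ)*((lam:ℝ)+1)*(N:ℝ) := by ring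
      _ ≤ 10*(ℓ:ℝ) := hmR
      _ ≤ 10*Real.logb 2 p := by linarith
    calc (((Finset.range N).image fun i => ((chainVal p q c m' i:ℕ):ZMod p)).card : ℝ)
        ≤ (N:ℝ) := hcardR
    _ ≤ 10*Real.logb 2 p/((q:ℝ)*Real.logb 2 (Real.logb 2 p)) := hgoal2
    _ = 10/(q:ℝ) * (Real.logb 2 p / Real.logb 2 (Real.logb 2 p)) := by
        field_simp
  · -- non-rectifiability
    intro R _ _ _ n a b hainj harange hbinj
    by_contra hcon
    push_neg at hcon
    have hiff : ∀ f : MvPolynomial (Fin n) ℤ, f.totalDegree ≤ k → l1Norm f ≤ k →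
        (MvPolynomial.aeval a f = 0 ↔ MvPolynomial.aeval b f = 0) := by
      intro f h1 h2
      rcases hcon f h1 h2 with h
      tauto
    -- surjectivity of a onto chain values
    have hA_sub : ∀ i, i < N → ∃ j, a j = ((chainVal p q c m' i : ℕ) : ZMod p) := by
      intro i hi
      have hmem : ((chainVal p q c m' i : ℕ) : ZMod p)
          ∈ ((Finset.range N).image fun i => ((chainVal p q c m' i:ℕ):ZMod p)) :=
        Finset.mem_image.mpr ⟨i, Finset.mem_range.mpr hi, rfl⟩
      have : ((chainVal p q c m' i : ℕ) : ZMod p) ∈ Set.range a := by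
        rw [harange]; exact_mod_cast hmem
      exact this
    have hσex : ∀ i, ∃ j : Fin n, (i < N → a j = ((chainVal p q c m' i : ℕ) : ZMod p)) := by
      intro i
      by_cases hi : i < N
      · obtain ⟨j, hj⟩ := hA_sub i hi
        exact ⟨j, fun _ => hj⟩
      · obtain ⟨j, hj⟩ := hA_sub 0 (by omega)
        exact ⟨j, fun h => absurd h hi⟩
    choose σ hσ using hσex
    -- the polynomials attached to each chain element
    have hdeg : ∀ i, 1 ≤ i →
        ((X (σ i) - ((chainRel p q c m' i).map
          (fun su => X (σ su.1) * X (σ su.2))).sum : MvPolynomial (Fin n) ℤ)).totalDegree ≤ k := by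
      intro i _
      rw [sub_eq_add_neg]
      refine (totalDegree_add _ _).trans ?_
      rw [totalDegree_neg]
      have h1 : (X (σ i) : MvPolynomial (Fin n) ℤ).totalDegree ≤ 2 := by
        rw [totalDegree_X]; omega
      have h2 : (((chainRel p q c m' i).map
          (fun su => (X (σ su.1) * X (σ su.2) : MvPolynomial (Fin n) ℤ))).sum).totalDegree ≤ 2 := by
        apply totalDegree_list_sum
        intro f hf
        obtain ⟨su, _, rfl⟩ := List.mem_map.mp hf
        exact totalDegree_X_mul_X _ _
      omega
    have hl1 : ∀ i, 1 ≤ i →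
        l1Norm ((X (σ i) - ((chainRel p q c m' i).map
          (fun su => X (σ su.1) * X (σ su.2))).sum : MvPolynomial (Fin n) ℤ)) ≤ k := by
      intro i _
      refine (l1Norm_sub_le _ _).trans ?_
      have h1 := l1Norm_X (n := n) (σ i)
      have h2 : l1Norm (((chainRel p q c m' i).map
          (fun su => (X (σ su.1) * X (σ su.2) : MvPolynomial (Fin n) ℤ))).sum)
          ≤ ((chainRel p q c m' i).map (fun su => (X (σ su.1) * X (σ su.2) : MvPolynomial (Fin n) ℤ))).length * 1 := by
        apply l1Norm_list_sum
        intro f hf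
        obtain ⟨su, _, rfl⟩ := List.mem_map.mp hf
        exact l1Norm_X_mul_X _ _
      rw [List.length_map] at h2
      have h3 := chainRel_length p q c m' hq i
      omega
    -- vanishing at a
    have haval : ∀ i, 1 ≤ i → i < N →
        MvPolynomial.aeval a ((X (σ i) - ((chainRel p q c m' i).map
          (fun su => X (σ su.1) * X (σ su.2))).sum : MvPolynomial (Fin n) ℤ)) = 0 := by
      intro i hi1 hiN
      rw [map_sub, map_list_sum, List.map_map]
      have hmapa : ((chainRel p q c m' i).map
            ((MvPolynomial.aeval a) ∘ fun su => (X (σ su.1) * X (σ su.2) : MvPolynomial (Fin n) ℤ)))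
          = ((chainRel p q c m' i).map
            (fun su => ((chainVal p q c m' su.1 : ℕ) : ZMod p) * ((chainVal p q c m' su.2 : ℕ) : ZMod p))) := by
        apply List.map_congr_left
        intro su hsu
        obtain ⟨hs1, hs2⟩ := chainRel_mem_lt p q c m' hq hc1 hi1 su hsu
        simp only [Function.comp_apply, map_mul, MvPolynomial.aeval_X]
        rw [hσ su.1 (by omega), hσ su.2 (by omega)]
      rw [hmapa, MvPolynomial.aeval_X, hσ i hiN]
      rw [← cast_pair_sum (S := ZMod p) (chainVal p q c m'), ← chainRel_sum p q c m' hq hc1 hm'1 hpm hi1 hiN]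
      exact sub_self _
    -- forcing
    have hforce : ∀ i, i < N → b (σ i) = ((chainVal p q c m' i : ℕ) : R) := by
      intro i
      induction i using Nat.strong_induction_on with
      | _ i IH =>
        intro hiN
        rcases Nat.eq_zero_or_pos i with rfl | hi1
        · -- base case
          have hdeg0 : ((X (σ 0) - C 1 : MvPolynomial (Fin n) ℤ)).totalDegree ≤ k := by
            rw [sub_eq_add_neg]
            refine (totalDegree_add _ _).trans ?_
            rw [totalDegree_neg, totalDegree_X, totalDegree_C]
            omega
          have hl10 : l1Norm ((X (σ 0) - C 1 : MvPolynomial (Fin n) ℤ)) ≤ k := by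
            refine (l1Norm_sub_le _ _).trans ?_
            have h1 := l1Norm_X (n := n) (σ 0)
            have h2 := l1Norm_C_one (n := n)
            omega
          have ha0 : MvPolynomial.aeval a ((X (σ 0) - C 1 : MvPolynomial (Fin n) ℤ)) = 0 := by
            rw [map_sub, MvPolynomial.aeval_X, MvPolynomial.aeval_C, hσ 0 hiN, chainVal_zero]
            simp
          have hb0 := (hiff _ hdeg0 hl10).mp ha0
          rw [map_sub, MvPolynomial.aeval_X, MvPolynomial.aeval_C, sub_eq_zero] at hb0
          rw [hb0, chainVal_zero]
          simp
        · -- inductive step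
          have ha := haval i hi1 hiN
          have hb := (hiff _ (hdeg i hi1) (hl1 i hi1)).mp ha
          rw [map_sub, map_list_sum, List.map_map, MvPolynomial.aeval_X, sub_eq_zero] at hb
          rw [hb]
          have hmapb : ((chainRel p q c m' i).map
                ((MvPolynomial.aeval b) ∘ fun su => (X (σ su.1) * X (σ su.2) : MvPolynomial (Fin n) ℤ)))
              = ((chainRel p q c m' i).map
                (fun su => ((chainVal p q c m' su.1 : ℕ) : R) * ((chainVal p q c m' su.2 : ℕ) : R))) := by
            apply List.map_congr_left
            intro su hsu
            obtain ⟨hs1, hs2⟩ := chainRel_mem_lt p q c m' hq hc1 hi1 su hsu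
            simp only [Function.comp_apply, map_mul, MvPolynomial.aeval_X]
            rw [IH su.1 hs1 (by omega), IH su.2 hs2 (by omega)]
          rw [hmapb, ← cast_pair_sum (S := R) (chainVal p q c m'),
            ← chainRel_sum p q c m' hq hc1 hm'1 hpm hi1 hiN]
    -- final contradiction
    have hlastval : chainVal p q c m' (2^c + (q-2) + (m'-1)) = p := by
      have := chainVal_horner p q c m' (r := m'-1)
      rw [this]
      have hz0 : m' - 1 - (m'-1) = 0 := by omega
      rw [hz0, Nat.mul_zero, Nat.mul_zero, pow_zero, Nat.div_one]
    have hlastlt : 2^c + (q-2) + (m'-1) < N := by omega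
    have hdegl : ((X (σ (2^c + (q-2) + (m'-1))) : MvPolynomial (Fin n) ℤ)).totalDegree ≤ k := by
      rw [totalDegree_X]; omega
    have hl1l : l1Norm ((X (σ (2^c + (q-2) + (m'-1))) : MvPolynomial (Fin n) ℤ)) ≤ k := by
      have := l1Norm_X (n := n) (σ (2^c + (q-2) + (m'-1)))
      omega
    have hal : MvPolynomial.aeval a ((X (σ (2^c + (q-2) + (m'-1))) : MvPolynomial (Fin n) ℤ)) = 0 := by
      rw [MvPolynomial.aeval_X, hσ _ hlastlt, hlastval]
      exact_mod_cast ZMod.natCast_self p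
    have hbl := (hiff _ hdegl hl1l).mp hal
    rw [MvPolynomial.aeval_X] at hbl
    rw [hforce _ hlastlt, hlastval] at hbl
    have : p = 0 := by exact_mod_cast hbl
    omega
end

section
/- Let k ≥ 2 and p ≥ 2^{32(k log_2(16k))^2}. Then p is (k,k)-constructible in at most (10/k) · log_2(p)/log_2 log_2(p) steps. -/
set_option maxHeartbeats 1000000

/-- A natural number `r` is `(k,t)`-constructible in at most `n` steps if there is a
sequence of naturals `0 = a 0, a 1, …, a m = r` with `m ≤ n` such that each `a i`
(`1 ≤ i ≤ m`) is the value at `(a 0, …, a (i-1))` of an integer polynomial of degree at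
most `t` and ℓ1-norm at most `k`. -/
def Constructible (k t n r : ℕ) : Prop :=
  ∃ m ≤ n, ∃ a : ℕ → ℕ, a 0 = 0 ∧ a m = r ∧
    ∀ i, 1 ≤ i → i ≤ m →
      ∃ f : MvPolynomial (Fin i) ℤ, f.totalDegree ≤ t ∧ l1Norm f ≤ k ∧
        MvPolynomial.aeval (fun j : Fin i => (a j : ℤ)) f = (a i : ℤ)

open MvPolynomial Finset

lemma l1Norm_zero {n : ℕ} : l1Norm (0 : MvPolynomial (Fin n) ℤ) = 0 := by
  simp [l1Norm]

lemma l1Norm_add_le {n : ℕ} (f g : MvPolynomial (Fin n) ℤ) :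
    l1Norm (f + g) ≤ l1Norm f + l1Norm g := by
  classical
  unfold l1Norm
  calc ∑ m ∈ (f + g).support, ((f + g).coeff m).natAbs
      ≤ ∑ m ∈ f.support ∪ g.support, ((f + g).coeff m).natAbs :=
        Finset.sum_le_sum_of_subset (MvPolynomial.support_add)
    _ ≤ ∑ m ∈ f.support ∪ g.support, ((f.coeff m).natAbs + (g.coeff m).natAbs) := by
        refine Finset.sum_le_sum fun m _ => ?_
        rw [MvPolynomial.coeff_add]
        exact Int.natAbs_add_le _ _
    _ = (∑ m ∈ f.support ∪ g.support, (f.coeff m).natAbs)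
        + ∑ m ∈ f.support ∪ g.support, (g.coeff m).natAbs := Finset.sum_add_distrib
    _ = _ := by
        congr 1
        · exact (Finset.sum_subset Finset.subset_union_left (fun m _ hm => by
            simp [MvPolynomial.notMem_support_iff.mp hm])).symm
        · exact (Finset.sum_subset Finset.subset_union_right (fun m _ hm => by
            simp [MvPolynomial.notMem_support_iff.mp hm])).symm

lemma l1Norm_sum_le {n : ℕ} {ι : Type*} (s : Finset ι) (f : ι → MvPolynomial (Fin n) ℤ) :
    l1Norm (∑ i ∈ s, f i) ≤ ∑ i ∈ s, l1Norm (f i) := by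
  classical
  induction s using Finset.induction with
  | empty => simp [l1Norm_zero]
  | insert _ _ h ih =>
      rw [Finset.sum_insert h, Finset.sum_insert h]
      exact le_trans (l1Norm_add_le _ _) (by omega)

lemma l1Norm_monomial_le {n : ℕ} (s : Fin n →₀ ℕ) (c : ℤ) :
    l1Norm (monomial s c) ≤ c.natAbs := by
  classical
  unfold l1Norm
  rcases eq_or_ne c 0 with h | h
  · simp [h]
  · rw [MvPolynomial.support_monomial, if_neg h]
    simp [MvPolynomial.coeff_monomial]

lemma X_mul_X_eq {n : ℕ} (u v : Fin n) :
    (X u * X v : MvPolynomial (Fin n) ℤ)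
      = monomial (Finsupp.single u 1 + Finsupp.single v 1) 1 := by
  rw [show (X u : MvPolynomial (Fin n) ℤ) = monomial (Finsupp.single u 1) 1 from rfl,
    show (X v : MvPolynomial (Fin n) ℤ) = monomial (Finsupp.single v 1) 1 from rfl,
    MvPolynomial.monomial_mul, one_mul]

lemma l1Norm_X_mul_X_le {n : ℕ} (u v : Fin n) :
    l1Norm (X u * X v : MvPolynomial (Fin n) ℤ) ≤ 1 := by
  rw [X_mul_X_eq]
  exact l1Norm_monomial_le _ _

lemma l1Norm_X_le {n : ℕ} (u : Fin n) :
    l1Norm (X u : MvPolynomial (Fin n) ℤ) ≤ 1 :=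
  l1Norm_monomial_le (Finsupp.single u 1) 1

lemma totalDegree_X_mul_X_le {n : ℕ} (u v : Fin n) :
    (X u * X v : MvPolynomial (Fin n) ℤ).totalDegree ≤ 2 := by
  refine le_trans (MvPolynomial.totalDegree_mul _ _) ?_
  simp [MvPolynomial.totalDegree_X]

lemma ofDigits_eq_sum (b : ℕ) :
    ∀ (l : List ℕ) (n : ℕ), l.length ≤ n →
      Nat.ofDigits b l = ∑ j ∈ Finset.range n, l.getD j 0 * b ^ j := by
  intro l
  induction l with
  | nil => intro n _; simp [Nat.ofDigits]
  | cons d tl ih =>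
      intro n hn
      cases n with
      | zero => simp at hn
      | succ n =>
          rw [Finset.sum_range_succ']
          have : ∀ j, (d :: tl).getD (j + 1) 0 * b ^ (j + 1)
              = b * (tl.getD j 0 * b ^ j) := by
            intro j
            simp [List.getD_cons_succ, pow_succ]
            ring
          simp only [this]
          rw [← Finset.mul_sum, ← ih n (by simpa using hn)]
          simp [Nat.ofDigits_cons]
          ring

lemma construct (k b p : ℕ) (hk : 2 ≤ k) (hb : 2 ≤ b) (hp : 1 ≤ p) :
    Constructible k k (b + (k - 2) + (Nat.digits (b ^ (k - 1)) p).length) p := by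
  classical
  set B := b ^ (k - 1) with hBdef
  have hB : 2 ≤ B := by
    calc 2 ≤ b := hb
    _ = b ^ 1 := (pow_one b).symm
    _ ≤ B := Nat.pow_le_pow_right (by omega) (by omega)
  set Ds := Nat.digits B p with hDsdef
  set L := Ds.length with hLdef
  have hL : 1 ≤ L :=
    List.length_pos_iff.mpr (Nat.digits_ne_nil_iff_ne_zero.mpr (by omega))
  set q := b + (k - 2) with hqdef
  set a : ℕ → ℕ := fun i =>
    if i ≤ b then i
    else if i ≤ q then b ^ (i - b + 1)
    else Nat.ofDigits B (Ds.drop (L - (i - q))) with hadef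
  have haSmall : ∀ i, i ≤ b → a i = i := fun i h => by simp [hadef, h]
  have haPow : ∀ x, b ≤ x → x ≤ q → a x = b ^ (x - b + 1) := by
    intro x h1 h2
    by_cases h : x ≤ b
    · have hx : x = b := le_antisymm h h1
      subst hx
      rw [haSmall x le_rfl]
      simp
    · simp only [hadef, if_neg h, if_pos h2]
  have haTail : ∀ t, 1 ≤ t → a (q + t) = Nat.ofDigits B (Ds.drop (L - t)) := by
    intro t ht
    have h1 : ¬ (q + t ≤ b) := by omega
    have h2 : ¬ (q + t ≤ q) := by omega
    simp only [hadef, if_neg h1, if_neg h2, Nat.add_sub_cancel_left]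
  have haQ : a q = B := by
    rw [haPow q (by omega) le_rfl, hBdef]
    congr 1
    omega
  refine ⟨q + L, le_rfl, a, by simp [hadef], ?_, ?_⟩
  · rw [haTail L hL, Nat.sub_self, List.drop_zero, hDsdef, Nat.ofDigits_digits]
  intro i hi1 hi2
  by_cases hcase1 : i = 1
  · subst hcase1
    refine ⟨C 1, ?_, ?_, ?_⟩
    · simp [MvPolynomial.totalDegree_C]
    · have h1 : (C 1 : MvPolynomial (Fin 1) ℤ) = monomial 0 1 := by
        simp [MvPolynomial.C_apply]
      rw [h1]
      exact le_trans (l1Norm_monomial_le _ _) (by omega)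
    · rw [haSmall 1 (by omega)]
      simp
  by_cases hib : i ≤ b
  · -- 2 ≤ i ≤ b
    have h2i : 2 ≤ i := by omega
    refine ⟨X ⟨i - 1, by omega⟩ + X ⟨1, by omega⟩, ?_, ?_, ?_⟩
    · refine le_trans (MvPolynomial.totalDegree_add _ _) ?_
      simp only [MvPolynomial.totalDegree_X]
      omega
    · refine le_trans (l1Norm_add_le _ _) ?_
      have h1 := l1Norm_X_le (n := i) ⟨i - 1, by omega⟩
      have h2 := l1Norm_X_le (n := i) ⟨1, by omega⟩
      omega
    · simp only [map_add, MvPolynomial.aeval_X]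
      rw [haSmall (i - 1) (by omega), haSmall 1 (by omega), haSmall i hib]
      push_cast [Nat.cast_sub (by omega : 1 ≤ i)]
      ring
  by_cases hiq : i ≤ q
  · -- b < i ≤ q
    refine ⟨X ⟨i - 1, by omega⟩ * X ⟨b, by omega⟩,
      le_trans (totalDegree_X_mul_X_le _ _) (by omega),
      le_trans (l1Norm_X_mul_X_le _ _) (by omega), ?_⟩
    simp only [map_mul, MvPolynomial.aeval_X]
    rw [haPow (i - 1) (by omega) (by omega), haSmall b le_rfl, haPow i (by omega) hiq]
    have he : i - 1 - b + 1 + 1 = i - b + 1 := by omega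
    push_cast
    rw [← pow_succ, he]
  · -- q < i ≤ q + L
    have hqi : q < i := by omega
    have hbi : b < i := by omega
    set t := i - q with htdef
    have ht1 : 1 ≤ t := by omega
    have htL : t ≤ L := by omega
    set D := Ds.getD (L - t) 0 with hDdef
    have hDmem : D ∈ Ds := by
      rw [hDdef, List.getD_eq_getElem Ds 0 (by omega)]
      exact List.getElem_mem _
    have hDltB : D < B := Nat.digits_lt_base (by omega) (by rw [hDsdef] at hDmem; exact hDmem)
    set es := Nat.digits b D with hesdef
    have hesLen : es.length ≤ k - 1 := by
      rcases Nat.eq_zero_or_pos D with h | h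
      · simp [hesdef, h]
      · rw [hesdef, Nat.digits_len b D (by omega) (by omega)]
        have := Nat.log_lt_of_lt_pow (by omega : D ≠ 0) hDltB
        omega
    have hesLt : ∀ j, es.getD j 0 < b := by
      intro j
      by_cases hj : j < es.length
      · rw [List.getD_eq_getElem es 0 hj]
        exact Nat.digits_lt_base (by omega) (List.getElem_mem _)
      · rw [List.getD_eq_default es 0 (by omega)]
        omega
    refine ⟨X (⟨if t = 1 then 0 else i - 1, by split <;> omega⟩ : Fin i) * X (⟨q, hqi⟩ : Fin i)
      + ∑ j ∈ Finset.range (k - 1),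
          X (⟨es.getD j 0, lt_trans (hesLt j) hbi⟩ : Fin i)
          * X (⟨min (if j = 0 then 1 else b + (j - 1)) q,
              lt_of_le_of_lt (min_le_right _ _) hqi⟩ : Fin i), ?_, ?_, ?_⟩
    · refine le_trans (MvPolynomial.totalDegree_add _ _) (max_le ?_ ?_)
      · exact le_trans (totalDegree_X_mul_X_le _ _) (by omega)
      · refine le_trans (MvPolynomial.totalDegree_finset_sum _ _) ?_
        exact Finset.sup_le fun j _ => le_trans (totalDegree_X_mul_X_le _ _) (by omega)
    · refine le_trans (l1Norm_add_le _ _) ?_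
      have h1 := l1Norm_X_mul_X_le (⟨if t = 1 then 0 else i - 1, by split <;> omega⟩ : Fin i)
        (⟨q, hqi⟩ : Fin i)
      have h2 : l1Norm (∑ j ∈ Finset.range (k - 1),
          X (⟨es.getD j 0, lt_trans (hesLt j) hbi⟩ : Fin i)
          * X (⟨min (if j = 0 then 1 else b + (j - 1)) q,
              lt_of_le_of_lt (min_le_right _ _) hqi⟩ : Fin i)) ≤ k - 1 := by
        refine le_trans (l1Norm_sum_le _ _) ?_
        calc ∑ j ∈ Finset.range (k - 1), l1Norm (X _ * X _) ≤ ∑ _j ∈ Finset.range (k - 1), 1 :=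
              Finset.sum_le_sum fun j _ => l1Norm_X_mul_X_le _ _
          _ = k - 1 := by simp
      omega
    · simp only [map_add, map_mul, map_sum, MvPolynomial.aeval_X]
      have hpwa : ∀ j, j < k - 1 → a (min (if j = 0 then 1 else b + (j - 1)) q) = b ^ j := by
        intro j hj
        have hle : (if j = 0 then 1 else b + (j - 1)) ≤ q := by split <;> omega
        rw [min_eq_left hle]
        by_cases h0 : j = 0
        · subst h0
          rw [if_pos rfl, haSmall 1 (by omega)]
          simp
        · rw [if_neg h0, haPow (b + (j - 1)) (by omega) (by omega)]
          congr 1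
          omega
      have hprev : a (if t = 1 then 0 else i - 1)
          = Nat.ofDigits B (Ds.drop (L - (t - 1))) := by
        by_cases h : t = 1
        · rw [if_pos h, haSmall 0 (by omega), h]
          rw [Nat.sub_self, Nat.sub_zero, hLdef, List.drop_length, Nat.ofDigits_nil]
        · rw [if_neg h]
          have hi1' : i - 1 = q + (t - 1) := by omega
          rw [hi1', haTail (t - 1) (by omega)]
      have hsum : ∑ j ∈ Finset.range (k - 1),
          ((a (es.getD j 0) : ℤ) * (a (min (if j = 0 then 1 else b + (j - 1)) q) : ℤ))
          = (D : ℤ) := by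
        have hc : ∀ j ∈ Finset.range (k - 1),
            ((a (es.getD j 0) : ℤ) * (a (min (if j = 0 then 1 else b + (j - 1)) q) : ℤ))
            = ((es.getD j 0 * b ^ j : ℕ) : ℤ) := by
          intro j hj
          rw [haSmall (es.getD j 0) (le_of_lt (hesLt j)), hpwa j (Finset.mem_range.mp hj)]
          push_cast
          ring
        rw [Finset.sum_congr rfl hc, ← Nat.cast_sum]
        rw [← ofDigits_eq_sum b es (k - 1) hesLen, hesdef, Nat.ofDigits_digits]
      have hkey : Nat.ofDigits B (Ds.drop (L - t))
          = D + B * Nat.ofDigits B (Ds.drop (L - (t - 1))) := by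
        have h1 : L - t < Ds.length := by omega
        have h2 : L - (t - 1) = L - t + 1 := by omega
        rw [h2, List.drop_eq_getElem_cons h1, Nat.ofDigits_cons]
        congr 1
        rw [hDdef, List.getD_eq_getElem Ds 0 h1]
      have hit : i = q + t := by omega
      rw [hprev, haQ]
      rw [hit, haTail t ht1, hkey, hsum]
      push_cast
      ring

lemma sq_le_four_two_pow (e : ℕ) : e ^ 2 ≤ 4 * 2 ^ e := by
  induction e with
  | zero => norm_num
  | succ n ih =>
      have h := (Nat.lt_two_pow_self (n := n))
      have h1 : 1 ≤ 2 ^ n := Nat.one_le_two_pow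
      have hexp : 2 ^ (n + 1) = 2 * 2 ^ n := by rw [pow_succ]; ring
      rw [hexp]
      nlinarith [ih, h, h1]

lemma nat_bound (k lam Lm1 : ℕ) (hk : 2 ≤ k)
    (h1 : 32 * (k * (4 + Nat.log 2 k)) ^ 2 ≤ lam)
    (hL : (k - 1) * (Nat.log 2 lam / 4 + 1) * Lm1 ≤ lam) :
    (2 ^ (Nat.log 2 lam / 4 + 1) + (k - 2) + (Lm1 + 1)) * (k * (Nat.log 2 lam + 1))
      ≤ 10 * lam := by
  set g := Nat.log 2 k with hg
  set l := Nat.log 2 lam with hl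
  set q4 := l / 4 with hq4
  set m0 := q4 + 1 with hm0
  have hg1 : 2 ^ g ≤ k := Nat.pow_log_le_self 2 (by omega)
  have hg2 : k < 2 ^ (g + 1) := Nat.lt_pow_succ_log_self (by norm_num) k
  have hlam0 : 2 ^ (2 * g + 9) ≤ lam := by
    calc 2 ^ (2 * g + 9) = 32 * (2 ^ g * 4) ^ 2 := by
          rw [pow_add, show (2:ℕ) ^ (2 * g) = (2 ^ g) ^ 2 from by rw [← pow_mul]; congr 1; ring]
          ring
    _ ≤ 32 * (k * (4 + g)) ^ 2 := by
        refine Nat.mul_le_mul_left 32 (Nat.pow_le_pow_left ?_ 2)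
        exact Nat.mul_le_mul hg1 (by omega)
    _ ≤ lam := h1
  have hl9 : 2 * g + 9 ≤ l := by
    have := Nat.log_mono_right (b := 2) hlam0
    rwa [Nat.log_pow (by norm_num)] at this
  have hlampos : lam ≠ 0 := by
    intro h
    rw [h] at hlam0
    have : 1 ≤ 2 ^ (2 * g + 9) := Nat.one_le_two_pow
    omega
  have hpl : 2 ^ l ≤ lam := Nat.pow_log_le_self 2 hlampos
  have hlam512 : 512 * k ^ 2 ≤ lam := by
    calc 512 * k ^ 2 = 32 * (k * 4) ^ 2 := by ring
    _ ≤ 32 * (k * (4 + g)) ^ 2 := by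
        refine Nat.mul_le_mul_left 32 (Nat.pow_le_pow_left ?_ 2)
        exact Nat.mul_le_mul le_rfl (by omega)
    _ ≤ lam := h1
  have hA : Lm1 * (k * (l + 1)) ≤ 8 * lam := by
    have h1' : k * (l + 1) ≤ 8 * ((k - 1) * m0) := by
      have e1 : l + 1 ≤ 4 * m0 := by omega
      have e2 : k ≤ 2 * (k - 1) := by omega
      calc k * (l + 1) ≤ (2 * (k - 1)) * (4 * m0) := Nat.mul_le_mul e2 e1
      _ = 8 * ((k - 1) * m0) := by ring
    calc Lm1 * (k * (l + 1)) ≤ Lm1 * (8 * ((k - 1) * m0)) := Nat.mul_le_mul_left _ h1'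
    _ = 8 * ((k - 1) * m0 * Lm1) := by ring
    _ ≤ 8 * lam := Nat.mul_le_mul_left 8 hL
  have hB1 : 2 ^ m0 * (k * (l + 1)) ≤ lam := by
    have hq4lt : q4 < 2 ^ q4 := (Nat.lt_two_pow_self (n := q4))
    have e1 : l + 1 ≤ 4 * 2 ^ q4 := by omega
    have e4 : 4 * q4 ≤ l := by omega
    have sq : (2 ^ m0 * (k * (l + 1))) ^ 2 ≤ lam ^ 2 := by
      calc (2 ^ m0 * (k * (l + 1))) ^ 2 ≤ (2 ^ m0 * (k * (4 * 2 ^ q4))) ^ 2 := by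
            refine Nat.pow_le_pow_left ?_ 2
            exact Nat.mul_le_mul le_rfl (Nat.mul_le_mul le_rfl e1)
      _ = 64 * k ^ 2 * (2 ^ q4) ^ 4 := by rw [hm0, pow_succ]; ring
      _ = 64 * k ^ 2 * 2 ^ (4 * q4) := by
          rw [show 4 * q4 = q4 * 4 from by ring, pow_mul]
      _ ≤ 64 * k ^ 2 * 2 ^ l := Nat.mul_le_mul_left _ (Nat.pow_le_pow_right (by norm_num) e4)
      _ ≤ (512 * k ^ 2) * 2 ^ l := by
          refine Nat.mul_le_mul_right _ ?_
          have : (0:ℕ) ≤ k ^ 2 := Nat.zero_le _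
          omega
      _ ≤ lam * lam := Nat.mul_le_mul hlam512 hpl
      _ = lam ^ 2 := by ring
    exact (Nat.pow_le_pow_iff_left (by norm_num)).mp sq
  have hB2 : (k - 1) * (k * (l + 1)) ≤ lam := by
    set e := l - (2 * g + 9) with he
    have hle : l = 2 * g + 9 + e := by omega
    have he2 : e ^ 2 ≤ 4 * 2 ^ e := sq_le_four_two_pow e
    have he1 : 1 ≤ 2 ^ e := Nat.one_le_two_pow
    have key : k ^ 2 * (l + 1) ^ 2 ≤ 32 * (4 + g) ^ 2 * 2 ^ l := by
      have hksq : k ^ 2 ≤ 2 ^ (2 * g + 2) := by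
        calc k ^ 2 ≤ (2 ^ (g + 1)) ^ 2 := Nat.pow_le_pow_left (le_of_lt hg2) 2
        _ = 2 ^ (2 * g + 2) := by rw [← pow_mul]; congr 1; ring
      have hll : (l + 1) ^ 2 ≤ 4096 * (4 + g) ^ 2 * 2 ^ e := by
        have expand : l + 1 = 2 * g + 10 + e := by omega
        rw [expand]
        have c1 : (2 * g + 10 + e) ^ 2 ≤ 2 * (2 * g + 10) ^ 2 + 2 * e ^ 2 := by
          zify
          nlinarith [sq_nonneg ((2 * (g:ℤ) + 10) - (e:ℤ))]
        have c2 : 2 * (2 * g + 10) ^ 2 ≤ 32 * (4 + g) ^ 2 := by nlinarith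
        have step2 : 2 * e ^ 2 ≤ 8 * 2 ^ e := by
          calc 2 * e ^ 2 ≤ 2 * (4 * 2 ^ e) := Nat.mul_le_mul_left 2 he2
          _ = 8 * 2 ^ e := by ring
        have a1 : 32 * (4 + g) ^ 2 ≤ 32 * (4 + g) ^ 2 * 2 ^ e := by
          calc 32 * (4 + g) ^ 2 = 32 * (4 + g) ^ 2 * 1 := by ring
          _ ≤ 32 * (4 + g) ^ 2 * 2 ^ e := Nat.mul_le_mul_left _ he1
        have hg16 : 1 ≤ (4 + g) ^ 2 := Nat.one_le_pow _ _ (by omega)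
        have a2 : 8 * 2 ^ e ≤ 8 * (4 + g) ^ 2 * 2 ^ e := by
          calc 8 * 2 ^ e = 8 * 1 * 2 ^ e := by ring
          _ ≤ 8 * (4 + g) ^ 2 * 2 ^ e :=
              Nat.mul_le_mul_right _ (Nat.mul_le_mul_left 8 hg16)
        calc (2 * g + 10 + e) ^ 2 ≤ 32 * (4 + g) ^ 2 + 2 * e ^ 2 := by omega
        _ ≤ 32 * (4 + g) ^ 2 * 2 ^ e + 8 * (4 + g) ^ 2 * 2 ^ e := by
            refine Nat.add_le_add a1 (le_trans step2 a2)
        _ = 40 * (4 + g) ^ 2 * 2 ^ e := by ring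
        _ ≤ 4096 * (4 + g) ^ 2 * 2 ^ e := by
            refine Nat.mul_le_mul_right _ (Nat.mul_le_mul_right _ (by norm_num))
      calc k ^ 2 * (l + 1) ^ 2 ≤ 2 ^ (2 * g + 2) * (4096 * (4 + g) ^ 2 * 2 ^ e) :=
            Nat.mul_le_mul hksq hll
      _ = 32 * (4 + g) ^ 2 * 2 ^ (2 * g + 9 + e) := by
          have hsplit : (2:ℕ) ^ (2 * g + 9 + e) = 2 ^ (2 * g + 2) * (128 * 2 ^ e) := by
            rw [show 2 * g + 9 + e = (2 * g + 2) + (7 + e) from by ring,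
              pow_add 2 (2 * g + 2) (7 + e), pow_add 2 7 e]
            norm_num
          rw [hsplit]
          ring
      _ = 32 * (4 + g) ^ 2 * 2 ^ l := by rw [← hle]
    have sq2 : ((k - 1) * (k * (l + 1))) ^ 2 ≤ lam ^ 2 := by
      calc ((k - 1) * (k * (l + 1))) ^ 2 ≤ (k * (k * (l + 1))) ^ 2 := by
            refine Nat.pow_le_pow_left (Nat.mul_le_mul ?_ le_rfl) 2
            omega
      _ = k ^ 2 * (k ^ 2 * (l + 1) ^ 2) := by ring
      _ ≤ k ^ 2 * (32 * (4 + g) ^ 2 * 2 ^ l) := Nat.mul_le_mul_left _ key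
      _ = (32 * (k * (4 + g)) ^ 2) * 2 ^ l := by ring
      _ ≤ lam * lam := Nat.mul_le_mul h1 hpl
      _ = lam ^ 2 := by ring
    exact (Nat.pow_le_pow_iff_left (by norm_num)).mp sq2
  have expand : (2 ^ m0 + (k - 2) + (Lm1 + 1)) * (k * (l + 1))
      = 2 ^ m0 * (k * (l + 1)) + (k - 1) * (k * (l + 1)) + Lm1 * (k * (l + 1)) := by
    have h : (k - 2) + (Lm1 + 1) = (k - 1) + Lm1 := by omega
    rw [add_assoc, h]
    ring
  calc (2 ^ m0 + (k - 2) + (Lm1 + 1)) * (k * (l + 1))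
      = 2 ^ m0 * (k * (l + 1)) + (k - 1) * (k * (l + 1)) + Lm1 * (k * (l + 1)) := expand
  _ ≤ lam + lam + 8 * lam := add_le_add (add_le_add hB1 hB2) hA
  _ = 10 * lam := by ring

lemma logb_two_pow (x : ℕ) : Real.logb 2 ((2 : ℝ) ^ x) = x := by
  rw [Real.logb_pow, Real.logb_self_eq_one (by norm_num)]
  ring

lemma hp_to_nat (k p : ℕ) (hk : 2 ≤ k)
    (hp : (2 : ℝ) ^ (32 * ((k : ℝ) * Real.logb 2 (16 * (k : ℝ))) ^ 2) ≤ p) :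
    32 * (k * (4 + Nat.log 2 k)) ^ 2 ≤ Nat.log 2 p := by
  set g := Nat.log 2 k with hg
  have hk0 : (0 : ℝ) < k := by exact_mod_cast (by omega : 0 < k)
  have hglog : (g : ℝ) ≤ Real.logb 2 k := by
    have h2g : ((2 : ℝ) ^ g) ≤ (k : ℝ) := by
      exact_mod_cast Nat.cast_le.mpr (Nat.pow_log_le_self 2 (by omega : k ≠ 0))
    calc (g : ℝ) = Real.logb 2 ((2 : ℝ) ^ g) := (logb_two_pow g).symm
    _ ≤ Real.logb 2 k := Real.logb_le_logb_of_le (by norm_num) (by positivity) h2g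
  have h16k : ((4 + g : ℕ) : ℝ) ≤ Real.logb 2 (16 * (k : ℝ)) := by
    rw [Real.logb_mul (by norm_num) (ne_of_gt hk0)]
    have h16 : Real.logb 2 (16 : ℝ) = 4 := by
      rw [show (16 : ℝ) = (2 : ℝ) ^ (4 : ℕ) from by norm_num, logb_two_pow]
      norm_num
    rw [h16]
    push_cast
    linarith [hglog]
  have hexp : ((32 * (k * (4 + g)) ^ 2 : ℕ) : ℝ)
      ≤ 32 * ((k : ℝ) * Real.logb 2 (16 * (k : ℝ))) ^ 2 := by
    push_cast
    have h0 : (0 : ℝ) ≤ (k : ℝ) * ((4 : ℝ) + g) := by positivity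
    have h1 : (k : ℝ) * ((4 : ℝ) + g) ≤ (k : ℝ) * Real.logb 2 (16 * (k : ℝ)) := by
      refine mul_le_mul_of_nonneg_left ?_ (le_of_lt hk0)
      push_cast at h16k
      linarith
    nlinarith [h0, h1]
  have hle : ((2 : ℝ) ^ ((32 * (k * (4 + g)) ^ 2 : ℕ) : ℝ)) ≤ p :=
    le_trans (Real.rpow_le_rpow_of_exponent_le (by norm_num) hexp) hp
  rw [Real.rpow_natCast] at hle
  have hnat : (2 : ℕ) ^ (32 * (k * (4 + g)) ^ 2) ≤ p := by exact_mod_cast hle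
  calc 32 * (k * (4 + g)) ^ 2
      = Nat.log 2 (2 ^ (32 * (k * (4 + g)) ^ 2)) := (Nat.log_pow (by norm_num) _).symm
  _ ≤ Nat.log 2 p := Nat.log_mono_right hnat

lemma real_side (k p n : ℕ) (hk : 2 ≤ k)
    (hNlog : 32 * (k * (4 + Nat.log 2 k)) ^ 2 ≤ Nat.log 2 p)
    (hn : n * (k * (Nat.log 2 (Nat.log 2 p) + 1)) ≤ 10 * Nat.log 2 p) :
    (n : ℝ) ≤ (10 / (k : ℝ)) * (Real.logb 2 p / Real.logb 2 (Real.logb 2 p)) := by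
  set lam := Nat.log 2 p with hlam
  set l := Nat.log 2 lam with hl
  have hlam2 : 2048 ≤ lam := by
    refine le_trans ?_ hNlog
    calc (2048 : ℕ) = 32 * 8 ^ 2 := by norm_num
    _ ≤ 32 * (k * (4 + Nat.log 2 k)) ^ 2 := by
        refine Nat.mul_le_mul_left 32 (Nat.pow_le_pow_left ?_ 2)
        calc (8 : ℕ) = 2 * 4 := by norm_num
        _ ≤ k * (4 + Nat.log 2 k) := Nat.mul_le_mul hk (by omega)
  have hp0 : p ≠ 0 := by
    intro h
    rw [hlam, h, Nat.log_zero_right] at hlam2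
    omega
  have hp2 : 2 ^ lam ≤ p := Nat.pow_log_le_self 2 hp0
  set L : ℝ := Real.logb 2 p with hLdef
  have h1 : (lam : ℝ) ≤ L := by
    have hc : ((2 : ℝ) ^ lam) ≤ (p : ℝ) := by exact_mod_cast hp2
    calc (lam : ℝ) = Real.logb 2 ((2 : ℝ) ^ lam) := (logb_two_pow lam).symm
    _ ≤ L := Real.logb_le_logb_of_le (by norm_num) (by positivity) hc
  have h2 : L < (lam : ℝ) + 1 := by
    have hlt : p < 2 ^ (lam + 1) := Nat.lt_pow_succ_log_self (by norm_num) p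
    have hc : (p : ℝ) < ((2 : ℝ) ^ (lam + 1)) := by exact_mod_cast hlt
    have hppos : (0 : ℝ) < p := by exact_mod_cast Nat.pos_of_ne_zero hp0
    calc L < Real.logb 2 ((2 : ℝ) ^ (lam + 1)) := Real.logb_lt_logb (by norm_num) hppos hc
    _ = (lam : ℝ) + 1 := by rw [logb_two_pow]; push_cast; ring
  have hLpos : (0 : ℝ) < L := by
    have : (2048 : ℝ) ≤ (lam : ℝ) := by exact_mod_cast hlam2
    linarith
  have h3 : Real.logb 2 L ≤ (l : ℝ) + 1 := by
    have hlam1 : lam < 2 ^ (l + 1) := Nat.lt_pow_succ_log_self (by norm_num) lam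
    have hc : (lam : ℝ) + 1 ≤ ((2 : ℝ) ^ (l + 1)) := by exact_mod_cast hlam1
    have hc2 : L ≤ ((2 : ℝ) ^ (l + 1)) := by linarith
    calc Real.logb 2 L ≤ Real.logb 2 ((2 : ℝ) ^ (l + 1)) :=
          Real.logb_le_logb_of_le (by norm_num) hLpos hc2
    _ = (l : ℝ) + 1 := by rw [logb_two_pow]; push_cast; ring
  have hlogLpos : (0 : ℝ) < Real.logb 2 L := by
    refine Real.logb_pos (by norm_num) ?_
    have : (2048 : ℝ) ≤ (lam : ℝ) := by exact_mod_cast hlam2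
    linarith
  have hkpos : (0 : ℝ) < (k : ℝ) := by exact_mod_cast (by omega : 0 < k)
  rw [div_mul_div_comm]
  rw [le_div_iff₀ (by positivity)]
  have c1 : (n : ℝ) * ((k : ℝ) * Real.logb 2 L) ≤ (n : ℝ) * ((k : ℝ) * ((l : ℝ) + 1)) := by
    refine mul_le_mul_of_nonneg_left ?_ (by positivity)
    exact mul_le_mul_of_nonneg_left h3 (by positivity)
  have c2 : ((n * (k * (l + 1)) : ℕ) : ℝ) ≤ ((10 * lam : ℕ) : ℝ) := Nat.cast_le.mpr hn
  push_cast at c2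
  calc (n : ℝ) * ((k : ℝ) * Real.logb 2 L) ≤ (n : ℝ) * ((k : ℝ) * ((l : ℝ) + 1)) := c1
  _ ≤ 10 * (lam : ℝ) := by linarith [c2]
  _ ≤ 10 * L := by linarith [h1]

/-- Any `p ≥ 2^{32 (k log₂(16k))²}` with `k ≥ 2` is `(k,k)`-constructible in at most
`(10/k) · log₂ p / log₂ log₂ p` steps. -/
theorem constructible_of_large {k p : ℕ} (hk : 2 ≤ k)
    (hp : (2 : ℝ) ^ (32 * ((k : ℝ) * Real.logb 2 (16 * (k : ℝ))) ^ 2) ≤ p) :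
    ∃ n : ℕ, (n : ℝ) ≤ (10 / (k : ℝ)) * (Real.logb 2 p / Real.logb 2 (Real.logb 2 p)) ∧
      Constructible k k n p := by
  have hN := hp_to_nat k p hk hp
  set lam := Nat.log 2 p with hlam
  set l := Nat.log 2 lam with hl
  set m0 := l / 4 + 1 with hm0
  set b := 2 ^ m0 with hbdef
  have hb : 2 ≤ b := by
    calc (2 : ℕ) = 2 ^ 1 := by norm_num
    _ ≤ 2 ^ m0 := Nat.pow_le_pow_right (by norm_num) (by omega)
  have hp0 : p ≠ 0 := by
    intro h
    have hpos : 0 < 32 * (k * (4 + Nat.log 2 k)) ^ 2 := by positivity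
    rw [hlam, h, Nat.log_zero_right] at hN
    omega
  have hp1 : 1 ≤ p := Nat.pos_of_ne_zero hp0
  refine ⟨b + (k - 2) + (Nat.digits (b ^ (k - 1)) p).length, ?_,
    construct k b p hk hb hp1⟩
  have hB2 : 1 < b ^ (k - 1) := by
    calc (1 : ℕ) < b := by omega
    _ = b ^ 1 := (pow_one b).symm
    _ ≤ b ^ (k - 1) := Nat.pow_le_pow_right (by omega) (by omega)
  have hLlen : (Nat.digits (b ^ (k - 1)) p).length = Nat.log (b ^ (k - 1)) p + 1 :=
    Nat.digits_len _ p hB2 hp0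
  have hdig : (k - 1) * m0 * Nat.log (b ^ (k - 1)) p ≤ lam := by
    have hpow : (b ^ (k - 1)) ^ Nat.log (b ^ (k - 1)) p ≤ p :=
      Nat.pow_log_le_self _ hp0
    have heq : (b ^ (k - 1)) ^ Nat.log (b ^ (k - 1)) p
        = 2 ^ (m0 * ((k - 1) * Nat.log (b ^ (k - 1)) p)) := by
      rw [hbdef, ← pow_mul, ← pow_mul]
      try ring_nf
    have hle2 : 2 ^ (m0 * ((k - 1) * Nat.log (b ^ (k - 1)) p)) ≤ p := heq ▸ hpow
    have h2 := Nat.log_mono_right (b := 2) hle2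
    rw [Nat.log_pow (by norm_num)] at h2
    calc (k - 1) * m0 * Nat.log (b ^ (k - 1)) p
        = m0 * ((k - 1) * Nat.log (b ^ (k - 1)) p) := by ring
    _ ≤ lam := h2
  have hnat := nat_bound k lam (Nat.log (b ^ (k - 1)) p) hk hN hdig
  refine real_side k p _ hk hN ?_
  rw [hLlen]
  exact hnat
end
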